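/- arXiv:1509.01994 — 3 statements merged into one kernel-verified Lean document; each statement's English description precedes it below -/
import Mathlib

section
/- Assume (A1)-(A4) and (B1)-(B3). Then for every u ∈ SX⁺ the functional J constrained to the set ℝu + X̃ = {tu + v : t ∈ ℝ, v ∈ X̃} has precisely two critical points u₁, u₂ with positive energy (i.e. points where the derivative of J vanishes on the subspace ℝu ⊕ X̃ and where J > 0). These are of the form u₁ = t₁u + v₁ and u₂ = t₂u + v₂ with t₁ > 0 > t₂ and v₁, v₂ ∈ X̃. Moreover, u₁ is the unique global maximum of J on ℝ⁺u + X̃ = {tu + v : t ≥ 0, v ∈ X̃}, u₂ is the unique global maximum of J on ℝ⁻u + X̃ = {tu + v : t ≤ 0, v ∈ X̃}, and u₁ and u₂ depend continuously on u ∈ SX⁺. -/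
open Filter Topology

noncomputable section

variable {H W : Type*} [NormedAddCommGroup H] [InnerProductSpace ℝ H] [CompleteSpace H]
  [NormedAddCommGroup W] [NormedSpace ℝ W] [CompleteSpace W]

/-- `uₙ` T-converges to `l`: `uₙ⁺ → l⁺` in the norm of `H` and `ũₙ ⇀ l̃` weakly in `W`. -/
def TConv (u : ℕ → H × W) (l : H × W) : Prop :=
  Tendsto (fun n => (u n).1) atTop (𝓝 l.1) ∧
    ∀ φ : W →L[ℝ] ℝ, Tendsto (fun n => φ (u n).2) atTop (𝓝 (φ l.2))

/-- The Nehari–Pankov set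
`N = {u ≠ 0 : J(u) > 0 and J'(u)[w] = 0 for all w ∈ ℝu + X̃}`. -/
def NehariPankov (J : H × W → ℝ) : Set (H × W) :=
  {u | u ≠ 0 ∧ 0 < J u ∧ ∀ (s : ℝ) (v : W), fderiv ℝ J u (s • u + ((0 : H), v)) = 0}

/-- The natural constraint `M = {u : I'(u)[v] = 0 for all v ∈ X̃}`. -/
def NatConstraint (I : H × W → ℝ) : Set (H × W) :=
  {u | ∀ v : W, fderiv ℝ I u ((0 : H), v) = 0}


open TopologicalSpace NormedSpace Set RealInnerProductSpace
set_option linter.unusedSectionVars false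
set_option maxHeartbeats 1000000

section BanachHelpers

section Helpers
variable {E : Type*} [NormedAddCommGroup E] [NormedSpace ℝ E]

lemma sep_point_closed_subspace (Y : Submodule ℝ E) (hY : IsClosed (Y : Set E)) (x : E)
    (hx : x ∉ Y) : ∃ f : E →L[ℝ] ℝ, (∀ y ∈ Y, f y = 0) ∧ f x ≠ 0 := by
  obtain ⟨f, u, hf1, hf2⟩ := geometric_hahn_banach_closed_point (Y.convex) hY hx
  have hu : 0 < u := by simpa using hf1 0 (Y.zero_mem)
  refine ⟨f, fun y hy => ?_, by intro h0; rw [h0] at hf2; linarith⟩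
  by_contra h
  have := hf1 (((u + 1) / f y) • y) (Y.smul_mem _ hy)
  rw [map_smul, smul_eq_mul, div_mul_cancel₀ _ h] at this
  linarith

lemma reflexive_subspace (hWrefl : Function.Surjective (inclusionInDoubleDual ℝ E))
    (Y : Submodule ℝ E) (hY : IsClosed (Y : Set E)) :
    Function.Surjective (inclusionInDoubleDual ℝ Y) := by
  intro Λ
  let R : StrongDual ℝ E →L[ℝ] StrongDual ℝ Y := (ContinuousLinearMap.compL ℝ Y E ℝ).flip Y.subtypeL
  have hR : ∀ (χ : StrongDual ℝ E) (y : Y), R χ y = χ y := fun χ y => rfl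
  obtain ⟨w, hw⟩ := hWrefl (Λ.comp R)
  have hwY : w ∈ Y := by
    by_contra hxY
    obtain ⟨f, hf0, hfx⟩ := sep_point_closed_subspace Y hY w hxY
    have h1 : inclusionInDoubleDual ℝ E w f = f w := dual_def ℝ E w f
    have h2 : R f = 0 := by ext y; simpa [hR] using hf0 y y.2
    have h3 : (Λ.comp R) f = 0 := by simp [ContinuousLinearMap.comp_apply, h2]
    rw [← hw] at h3
    exact hfx (by rw [← h1]; exact h3)
  refine ⟨⟨w, hwY⟩, ?_⟩
  ext ψ
  obtain ⟨χ, hχ, -⟩ := exists_extension_norm_eq Y ψ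
  have hRχ : R χ = ψ := by ext y; exact hχ y
  have hh : inclusionInDoubleDual ℝ Y ⟨w, hwY⟩ ψ = ψ ⟨w, hwY⟩ := dual_def ℝ Y _ ψ
  rw [hh, ← hRχ, hR]
  have := congrArg (fun T => T χ) hw
  simpa [dual_def] using this

end Helpers

lemma separable_of_separable_dual (X : Type*) [NormedAddCommGroup X] [NormedSpace ℝ X]
    [SeparableSpace (StrongDual ℝ X)] : SeparableSpace X := by
  obtain ⟨s, hsc, hsd⟩ := TopologicalSpace.exists_countable_dense (StrongDual ℝ X)
  have hsne : s.Nonempty := hsd.nonempty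
  obtain ⟨g, hgs⟩ := hsc.exists_eq_range hsne
  have hgx : ∀ k : ℕ, ∃ x : X, ‖x‖ ≤ 1 ∧ ‖g k‖ ≤ 2 * ‖g k x‖ := by
    intro k
    rcases eq_or_ne (g k) 0 with h | h
    · exact ⟨0, by norm_num, by simp [h]⟩
    · have : ‖g k‖ / 2 < ‖g k‖ := by
        have : 0 < ‖g k‖ := norm_pos_iff.mpr h
        linarith
      obtain ⟨x, hx1, hx2⟩ := (g k).exists_lt_apply_of_lt_opNorm this
      exact ⟨x, hx1.le, by rw [Real.norm_eq_abs] at hx2 ⊢; linarith⟩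
  choose x hx1 hx2 using hgx
  set Y : Submodule ℝ X := (Submodule.span ℝ (Set.range x)).topologicalClosure with hYdef
  have hYsep : IsSeparable (Y : Set X) := ((Set.countable_range x).isSeparable.span).closure
  have hYtop : Y = ⊤ := by
    by_contra hne
    obtain ⟨z, hz⟩ : ∃ z : X, z ∉ Y := by
      by_contra hall
      push_neg at hall
      exact hne (Submodule.eq_top_iff'.mpr hall)
    obtain ⟨f, hf0, hfz⟩ :=
      sep_point_closed_subspace Y (Submodule.isClosed_topologicalClosure _) z hz
    have hfpos : 0 < ‖f‖ := norm_pos_iff.mpr (fun h => hfz (by rw [h]; rfl))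
    obtain ⟨φ, hφs, hφd⟩ := hsd.exists_dist_lt f (by positivity : (0:ℝ) < ‖f‖/4)
    rw [hgs] at hφs
    obtain ⟨k, rfl⟩ := hφs
    have hxkY : (x k) ∈ Y :=
      Submodule.le_topologicalClosure _ (Submodule.subset_span ⟨k, rfl⟩)
    have hfxk : f (x k) = 0 := hf0 _ hxkY
    have h1 : ‖g k (x k)‖ ≤ ‖g k - f‖ := by
      have heq : g k (x k) = (g k - f) (x k) := by simp [hfxk]
      rw [heq]
      calc ‖(g k - f) (x k)‖ ≤ ‖g k - f‖ * ‖x k‖ := (g k - f).le_opNorm _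
        _ ≤ ‖g k - f‖ * 1 := mul_le_mul_of_nonneg_left (hx1 k) (norm_nonneg _)
        _ = ‖g k - f‖ := mul_one _
    have hd : ‖g k - f‖ < ‖f‖ / 4 := by
      rw [dist_eq_norm] at hφd
      rw [← norm_neg]
      simpa using hφd
    have h2 : ‖f‖ ≤ ‖f - g k‖ + ‖g k‖ := by
      calc ‖f‖ = ‖f - g k + g k‖ := by rw [sub_add_cancel]
        _ ≤ ‖f - g k‖ + ‖g k‖ := norm_add_le _ _
    have h3 : ‖f - g k‖ = ‖g k - f‖ := norm_sub_rev _ _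
    have := hx2 k
    linarith
  have huniv : IsSeparable (Set.univ : Set X) := by
    have : (Y : Set X) = Set.univ := by rw [hYtop]; rfl
    rwa [this] at hYsep
  rw [← isSeparable_univ_iff]
  exact huniv

lemma diag_extract (f : ℕ → ℕ → ℝ) (M : ℕ → ℝ) (hf : ∀ n k, f n k ∈ Set.Icc (-(M k)) (M k)) :
    ∃ φ : ℕ → ℕ, StrictMono φ ∧ ∀ k, ∃ L : ℝ, Tendsto (fun n => f (φ n) k) atTop (𝓝 L) := by
  have hcomp : IsCompact {g : ℕ → ℝ | ∀ k, g k ∈ Set.Icc (-(M k)) (M k)} := by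
    have := isCompact_pi_infinite (fun k : ℕ => isCompact_Icc (a := -(M k)) (b := M k))
    convert this using 1
  have hseq : IsSeqCompact {g : ℕ → ℝ | ∀ k, g k ∈ Set.Icc (-(M k)) (M k)} := hcomp.isSeqCompact
  obtain ⟨L, _, φ, hφ, hconv⟩ := hseq (fun n => hf n)
  refine ⟨φ, hφ, fun k => ⟨L k, ?_⟩⟩
  exact (continuous_apply k).continuousAt (x := L) |>.tendsto.comp hconv

section WSC
variable {E : Type*} [NormedAddCommGroup E] [NormedSpace ℝ E]

lemma exists_lim_functional (z : ℕ → E) (B : ℝ) (hz : ∀ n, ‖z n‖ ≤ B)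
    (hconv : ∀ ψ : E →L[ℝ] ℝ, ∃ L, Tendsto (fun n => ψ (z n)) atTop (𝓝 L)) :
    ∃ F : StrongDual ℝ (StrongDual ℝ E), ∀ ψ : StrongDual ℝ E, Tendsto (fun n => ψ (z n)) atTop (𝓝 (F ψ)) := by
  choose L hL using hconv
  have hadd : ∀ ψ₁ ψ₂ : StrongDual ℝ E, L (ψ₁ + ψ₂) = L ψ₁ + L ψ₂ := by
    intro ψ₁ ψ₂
    have h1 : Tendsto (fun n => ψ₁ (z n) + ψ₂ (z n)) atTop (𝓝 (L ψ₁ + L ψ₂)) :=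
      (hL ψ₁).add (hL ψ₂)
    have h2 := hL (ψ₁ + ψ₂)
    simp only [ContinuousLinearMap.add_apply] at h2
    exact tendsto_nhds_unique h2 h1
  have hsmul : ∀ (c : ℝ) (ψ : StrongDual ℝ E), L (c • ψ) = c * L ψ := by
    intro c ψ
    have h1 : Tendsto (fun n => c * ψ (z n)) atTop (𝓝 (c * L ψ)) := (hL ψ).const_mul c
    have h2 := hL (c • ψ)
    simp only [ContinuousLinearMap.smul_apply, smul_eq_mul] at h2
    exact tendsto_nhds_unique h2 h1
  have hB0 : 0 ≤ B := le_trans (norm_nonneg _) (hz 0)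
  have hbdd : ∀ ψ : StrongDual ℝ E, ‖L ψ‖ ≤ B * ‖ψ‖ := by
    intro ψ
    have h1 : ∀ n, ‖ψ (z n)‖ ≤ B * ‖ψ‖ := fun n =>
      calc ‖ψ (z n)‖ ≤ ‖ψ‖ * ‖z n‖ := ψ.le_opNorm _
        _ ≤ ‖ψ‖ * B := mul_le_mul_of_nonneg_left (hz n) (norm_nonneg _)
        _ = B * ‖ψ‖ := mul_comm _ _
    have h2 : Tendsto (fun n => ‖ψ (z n)‖) atTop (𝓝 ‖L ψ‖) := (hL ψ).norm
    exact le_of_tendsto h2 (Eventually.of_forall h1)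
  exact ⟨LinearMap.mkContinuous
    { toFun := L, map_add' := hadd, map_smul' := fun c ψ => hsmul c ψ } B hbdd, hL⟩

lemma cauchy_of_dense_conv {z : ℕ → E} {B : ℝ} (hz : ∀ n, ‖z n‖ ≤ B)
    {ψs : ℕ → StrongDual ℝ E} (hd : DenseRange ψs)
    (hc : ∀ k, ∃ L, Tendsto (fun n => ψs k (z n)) atTop (𝓝 L)) :
    ∀ ψ : StrongDual ℝ E, ∃ L, Tendsto (fun n => ψ (z n)) atTop (𝓝 L) := by
  have hB0 : 0 ≤ B := le_trans (norm_nonneg _) (hz 0)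
  intro ψ
  have hcs : CauchySeq (fun n => ψ (z n)) := by
    rw [Metric.cauchySeq_iff]
    intro ε hε
    have hpos : (0:ℝ) < ε / (3 * (B + 1)) := by positivity
    obtain ⟨k, hdist⟩ := hd.exists_dist_lt ψ hpos
    obtain ⟨L, hL⟩ := hc k
    have hCk : CauchySeq (fun n => ψs k (z n)) := hL.cauchySeq
    rw [Metric.cauchySeq_iff] at hCk
    obtain ⟨N, hN⟩ := hCk (ε / 3) (by linarith)
    refine ⟨N, fun m hm n hn => ?_⟩
    have key : ∀ j, |ψ (z j) - ψs k (z j)| ≤ ε / 3 := by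
      intro j
      have h1 : |ψ (z j) - ψs k (z j)| = ‖(ψ - ψs k) (z j)‖ := by
        simp [Real.norm_eq_abs]
      rw [h1]
      calc ‖(ψ - ψs k) (z j)‖ ≤ ‖ψ - ψs k‖ * ‖z j‖ := (ψ - ψs k).le_opNorm _
        _ ≤ ‖ψ - ψs k‖ * B := mul_le_mul_of_nonneg_left (hz j) (norm_nonneg _)
        _ ≤ (ε / (3 * (B + 1))) * B := by
            apply mul_le_mul_of_nonneg_right _ hB0
            rw [dist_eq_norm] at hdist
            exact hdist.le
        _ ≤ ε / 3 := by
            rw [div_mul_eq_mul_div, div_le_div_iff₀ (by linarith) (by norm_num)]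
            nlinarith
    have h2 := hN m hm n hn
    rw [Real.dist_eq] at h2 ⊢
    have k1 := key m
    have k2 := key n
    have heq : ψ (z m) - ψ (z n) =
        (ψ (z m) - ψs k (z m)) + (ψs k (z m) - ψs k (z n)) + (ψs k (z n) - ψ (z n)) := by ring
    rw [heq]
    have a1 := abs_add_le ((ψ (z m) - ψs k (z m)) + (ψs k (z m) - ψs k (z n))) (ψs k (z n) - ψ (z n))
    have a2 := abs_add_le (ψ (z m) - ψs k (z m)) (ψs k (z m) - ψs k (z n))
    have k2' : |ψs k (z n) - ψ (z n)| ≤ ε / 3 := by rw [abs_sub_comm]; exact key n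
    linarith
  exact cauchySeq_tendsto_of_complete hcs

lemma weak_seq_compact [CompleteSpace E]
    (hWrefl : Function.Surjective (inclusionInDoubleDual ℝ E))
    (v : ℕ → E) (B : ℝ) (hB : ∀ n, ‖v n‖ ≤ B) :
    ∃ (y : E) (φ : ℕ → ℕ), StrictMono φ ∧
      ∀ ψ : E →L[ℝ] ℝ, Tendsto (fun n => ψ (v (φ n))) atTop (𝓝 (ψ y)) := by
  have hB0 : 0 ≤ B := le_trans (norm_nonneg _) (hB 0)
  set Y : Submodule ℝ E := (Submodule.span ℝ (Set.range v)).topologicalClosure with hYdef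
  have hYcl : IsClosed (Y : Set E) := Submodule.isClosed_topologicalClosure _
  haveI : CompleteSpace Y := hYcl.completeSpace_coe
  have hmem : ∀ n, v n ∈ Y :=
    fun n => Submodule.le_topologicalClosure _ (Submodule.subset_span ⟨n, rfl⟩)
  set vY : ℕ → Y := fun n => ⟨v n, hmem n⟩ with hvY
  have hvYnorm : ∀ n, ‖vY n‖ ≤ B := fun n => hB n
  haveI hYsep : SeparableSpace Y := by
    have h1 : IsSeparable (Y : Set E) := ((Set.countable_range v).isSeparable.span).closure
    exact h1.separableSpace
  have hYrefl : Function.Surjective (inclusionInDoubleDual ℝ Y) :=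
    reflexive_subspace hWrefl Y hYcl
  haveI : SeparableSpace (StrongDual ℝ (StrongDual ℝ Y)) :=
    hYrefl.denseRange.separableSpace (inclusionInDoubleDual ℝ Y).continuous
  haveI : SeparableSpace (StrongDual ℝ Y) := separable_of_separable_dual (StrongDual ℝ Y)
  have hψd : DenseRange (denseSeq (StrongDual ℝ Y)) := denseRange_denseSeq _
  set ψs : ℕ → StrongDual ℝ Y := denseSeq (StrongDual ℝ Y) with hψs
  have hbound : ∀ n k, ψs k (vY n) ∈ Set.Icc (-(‖ψs k‖ * B)) (‖ψs k‖ * B) := by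
    intro n k
    have h2 : ‖ψs k (vY n)‖ ≤ ‖ψs k‖ * B := le_trans ((ψs k).le_opNorm (vY n))
      (mul_le_mul_of_nonneg_left (hvYnorm n) (norm_nonneg _))
    rw [Real.norm_eq_abs] at h2
    exact ⟨(abs_le.mp h2).1, (abs_le.mp h2).2⟩
  obtain ⟨φ, hφmono, hφconv⟩ :=
    diag_extract (fun n k => ψs k (vY n)) (fun k => ‖ψs k‖ * B) hbound
  have hconv : ∀ ψ : StrongDual ℝ Y, ∃ L, Tendsto (fun n => ψ (vY (φ n))) atTop (𝓝 L) :=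
    cauchy_of_dense_conv (fun n => hvYnorm (φ n)) hψd hφconv
  obtain ⟨F, hF⟩ := exists_lim_functional (fun n => vY (φ n)) B (fun n => hvYnorm (φ n)) hconv
  obtain ⟨y', hy'⟩ := hYrefl F
  refine ⟨(y' : E), φ, hφmono, fun χ => ?_⟩
  let ψ : StrongDual ℝ Y := χ.comp Y.subtypeL
  have h3 : Tendsto (fun n => ψ (vY (φ n))) atTop (𝓝 (F ψ)) := hF ψ
  have h4 : F ψ = ψ y' := by
    rw [← hy']
    exact (dual_def ℝ Y y' ψ).symm
  rw [h4] at h3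
  exact h3

end WSC

end BanachHelpers

section MainDev
variable {I J : H × W → ℝ}


lemma key_eq (u : H) (t : ℝ) (v : W) : t • ((u, 0) : H × W) + ((0 : H), v) = (t • u, v) := by
  ext <;> simp

variable {I J : H × W → ℝ}

lemma differentiableJ (hJ : ∀ u : H × W, J u = 1 / 2 * ‖u.1‖ ^ 2 - I u)
    (hIC1 : ContDiff ℝ 1 I) : Differentiable ℝ J := by
  have hJe : J = fun w : H × W => 1 / 2 * ‖w.1‖ ^ 2 - I w := funext hJ
  rw [hJe]
  apply Differentiable.sub
  · apply Differentiable.const_mul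
    exact fun w => (differentiableAt_fst (p := w)).norm_sq ℝ
  · exact hIC1.differentiable one_ne_zero

lemma fderivJ_apply (hJ : ∀ u : H × W, J u = 1 / 2 * ‖u.1‖ ^ 2 - I u)
    (hIC1 : ContDiff ℝ 1 I) (w x : H × W) :
    fderiv ℝ J w x = ⟪w.1, x.1⟫ - fderiv ℝ I w x := by
  have hJe : J = fun w : H × W => 1 / 2 * (⟪w.1, w.1⟫ : ℝ) - I w := by
    funext p
    rw [hJ p, real_inner_self_eq_norm_sq]
  have hIdiff : DifferentiableAt ℝ I w := (hIC1.differentiable one_ne_zero) w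
  have hfst : DifferentiableAt ℝ (fun p : H × W => p.1) w := differentiableAt_fst
  have hinner : DifferentiableAt ℝ (fun p : H × W => (⟪p.1, p.1⟫ : ℝ)) w :=
    hfst.inner ℝ hfst
  rw [hJe, fderiv_fun_sub ((hinner.const_mul _)) hIdiff]
  rw [ContinuousLinearMap.sub_apply]
  congr 1
  rw [fderiv_const_mul hinner, ContinuousLinearMap.smul_apply]
  rw [fderiv_inner_apply ℝ hfst hfst]
  have hfd : fderiv ℝ (fun p : H × W => p.1) w x = x.1 := by
    rw [fderiv_fst]; rfl
  rw [hfd, real_inner_comm x.1 w.1]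
  simp only [smul_eq_mul]
  ring

lemma J_apply (hJ : ∀ u : H × W, J u = 1 / 2 * ‖u.1‖ ^ 2 - I u)
    {u : H} (hu : ‖u‖ = 1) {t : ℝ} (ht : 0 ≤ t) (v : W) :
    J (t • u, v) = t ^ 2 / 2 - I (t • u, v) := by
  rw [hJ]
  have h1 : ‖(t • u : H)‖ = t := by
    rw [norm_smul, hu, Real.norm_eq_abs, abs_of_nonneg ht, mul_one]
  simp only [h1]
  ring

lemma a_le {r a : ℝ} (ha : a = sInf {c : ℝ | ∃ h : H, ‖h‖ = r ∧ c = J (h, (0 : W))})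
    (hapos : 0 < a) : ∀ h : H, ‖h‖ = r → a ≤ J (h, (0 : W)) := by
  intro h hh
  have hmem : J (h, (0 : W)) ∈ {c : ℝ | ∃ h : H, ‖h‖ = r ∧ c = J (h, (0 : W))} := ⟨h, hh, rfl⟩
  by_cases hb : BddBelow {c : ℝ | ∃ h : H, ‖h‖ = r ∧ c = J (h, (0 : W))}
  · rw [ha]; exact csInf_le hb hmem
  · rw [Real.sInf_of_not_bddBelow hb] at ha
    linarith [ha ▸ hapos]

lemma subseq_unbounded {f : ℕ → ℝ} (h : ¬∃ C, ∀ n, f n ≤ C) :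
    ∃ φ : ℕ → ℕ, StrictMono φ ∧ Tendsto (f ∘ φ) atTop atTop := by
  have key : ∀ b : ℝ, ∃ n, b < f n := by
    intro b
    by_contra hc
    push_neg at hc
    exact h ⟨b, fun n => hc n⟩
  have step : ∀ m : ℕ, ∀ k : ℝ, ∃ n, m < n ∧ k < f n := by
    intro m k
    obtain ⟨n, hn⟩ := key (max k ((Finset.range (m + 1)).sup' (by simp) f))
    refine ⟨n, ?_, lt_of_le_of_lt (le_max_left _ _) hn⟩
    by_contra hle
    push_neg at hle
    have h1 : f n ≤ (Finset.range (m + 1)).sup' (by simp) f :=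
      Finset.le_sup' f (by simp [Nat.lt_succ_iff.mpr hle])
    have h2 := lt_of_le_of_lt (le_max_right k _) hn
    linarith
  choose g hg1 hg2 using step
  let φ : ℕ → ℕ := fun n => Nat.rec (g 0 0) (fun k ih => g ih (k + 1)) n
  have hφs : StrictMono φ := strictMono_nat_of_lt_succ (fun n => hg1 _ _)
  have hφv : ∀ n : ℕ, ((n : ℝ) + 1) < f (φ (n + 1)) := fun n => hg2 (φ n) _
  refine ⟨φ, hφs, ?_⟩
  rw [tendsto_atTop_atTop]
  intro b
  obtain ⟨N, hN⟩ := exists_nat_ge b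
  refine ⟨N + 1, fun n hn => ?_⟩
  obtain ⟨m, rfl⟩ := Nat.exists_eq_add_of_le hn
  have h1 := hφv (N + m)
  show b ≤ f (φ (N + 1 + m))
  have h3 : N + 1 + m = (N + m) + 1 := by ring
  rw [h3]
  have : ((N:ℝ)) ≤ ((N + m : ℕ) : ℝ) + 1 := by push_cast; linarith [Nat.cast_nonneg (α := ℝ) m]
  linarith

/-- Criticality of `J` at `w` along the subspace `ℝ(u,0) ⊕ X̃`. -/
def Crit (J : H × W → ℝ) (u : H) (w : H × W) : Prop :=
  ∀ (s : ℝ) (v : W), fderiv ℝ J w (s • ((u, 0) : H × W) + ((0 : H), v)) = 0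


lemma lemU (hJ : ∀ u : H × W, J u = 1 / 2 * ‖u.1‖ ^ 2 - I u) (hIC1 : ContDiff ℝ 1 I)
    (hB3 : ∀ u ∈ NehariPankov J, ∀ t : ℝ, 0 ≤ t → ∀ v : W, t • u + ((0 : H), v) ≠ u →
      (t ^ 2 - 1) / 2 * fderiv ℝ I u u + t * fderiv ℝ I u ((0 : H), v)
        + I u - I (t • u + ((0 : H), v)) < 0)
    {u : H} (hu : ‖u‖ = 1) {t : ℝ} {v : W} (ht : 0 < t)
    (hpos : 0 < J (t • u, v)) (hcrit : Crit J u (t • u, v)) :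
    ∀ (t' : ℝ) (v' : W), 0 ≤ t' → ((t' • u, v') : H × W) ≠ (t • u, v) →
      J (t' • u, v') < J (t • u, v) := by
  have hun : u ≠ 0 := by
    intro h0
    rw [h0, norm_zero] at hu
    exact one_ne_zero hu.symm
  set w : H × W := (t • u, v) with hwdef
  have hIww : fderiv ℝ I w w = t ^ 2 := by
    have h0 := hcrit t v
    rw [key_eq, ← hwdef] at h0
    rw [fderivJ_apply hJ hIC1] at h0
    have h1 : (⟪(w.1 : H), w.1⟫ : ℝ) = t ^ 2 := by
      show (⟪(t • u : H), t • u⟫ : ℝ) = t ^ 2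
      rw [real_inner_smul_left, real_inner_smul_right, real_inner_self_eq_norm_sq, hu]
      ring
    rw [h1] at h0
    linarith
  have hIz : ∀ z : W, fderiv ℝ I w ((0 : H), z) = 0 := by
    intro z
    have h0 := hcrit 0 z
    rw [key_eq, zero_smul] at h0
    rw [fderivJ_apply hJ hIC1] at h0
    have h1 : (⟪(w.1 : H), ((0 : H), z).1⟫ : ℝ) = 0 := by
      show (⟪(w.1 : H), (0 : H)⟫ : ℝ) = 0
      exact inner_zero_right _
    rw [h1] at h0
    linarith
  have hN : w ∈ NehariPankov J := by
    refine ⟨?_, hpos, ?_⟩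
    · intro h0
      have h1 : (t • u : H) = 0 := congrArg Prod.fst h0
      rcases smul_eq_zero.mp h1 with h | h
      · exact (ne_of_gt ht) h
      · exact hun h
    · intro s z
      have heq : s • w + ((0 : H), z) = (s * t) • ((u, 0) : H × W) + ((0 : H), s • v + z) := by
        rw [key_eq, hwdef, Prod.smul_mk, Prod.mk_add_mk, add_zero, smul_smul]
      rw [heq]
      exact hcrit _ _
  intro t' v' ht' hne
  have htne : t ≠ 0 := ne_of_gt ht
  have hst : (t' / t) * t = t' := div_mul_cancel₀ _ htne
  have hw' : ((t' / t) : ℝ) • w + ((0 : H), v' - (t' / t) • v) = ((t' • u, v') : H × W) := by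
    rw [hwdef, Prod.smul_mk, Prod.mk_add_mk, add_zero, smul_smul, hst]
    simp
  have hne' : ((t' / t) : ℝ) • w + ((0 : H), v' - (t' / t) • v) ≠ w := by
    rw [hw']; exact hne
  have h3 := hB3 w hN (t' / t) (div_nonneg ht' ht.le) (v' - (t' / t) • v) hne'
  rw [hIww, hIz, hw'] at h3
  have hJw : J w = t ^ 2 / 2 - I w := J_apply hJ hu ht.le v
  have hJw' : J ((t' • u, v') : H × W) = t' ^ 2 / 2 - I (t' • u, v') := J_apply hJ hu ht' v'
  have hkey : ((t' / t) ^ 2 - 1) / 2 * t ^ 2 = t' ^ 2 / 2 - t ^ 2 / 2 := by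
    field_simp
  rw [hkey] at h3
  rw [hJw, hJw']
  linarith


def MaxAt (J : H × W → ℝ) (a : ℝ) (u : H) (w : H × W) : Prop :=
  (∃ (t : ℝ) (v : W), 0 < t ∧ w = ((t • u : H), v)) ∧ a ≤ J w ∧ Crit J u w ∧
    ∀ (t' : ℝ) (v' : W), 0 ≤ t' → ((t' • u : H), v') ≠ w → J ((t' • u : H), v') < J w
lemma tk_bdd (hJ : ∀ u : H × W, J u = 1 / 2 * ‖u.1‖ ^ 2 - I u)
    (hB2 : ∀ (t : ℕ → ℝ) (u : ℕ → H × W) (u₀ : H), u₀ ≠ 0 → Tendsto t atTop atTop →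
      Tendsto (fun n => (u n).1) atTop (𝓝 u₀) →
      Tendsto (fun n => I (t n • u n) / t n ^ 2) atTop atTop)
    (uk : ℕ → H) (hk1 : ∀ n, ‖uk n‖ = 1) (u : H) (hu : ‖u‖ = 1)
    (huk : Tendsto uk atTop (𝓝 u))
    (tk : ℕ → ℝ) (htk : ∀ n, 0 ≤ tk n) (vk : ℕ → W)
    (c : ℝ) (hc : 0 < c) (hJc : ∀ n, c ≤ J (tk n • uk n, vk n)) :
    ∃ C, ∀ n, tk n ≤ C := by
  set wk : ℕ → H × W := fun n => (tk n • uk n, vk n) with hwk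
  have hJw : ∀ n, J (wk n) = tk n ^ 2 / 2 - I (wk n) := fun n =>
    J_apply hJ (hk1 n) (htk n) (vk n)
  have hu0 : u ≠ 0 := by
    intro h0; rw [h0, norm_zero] at hu; exact one_ne_zero hu.symm
  by_contra hC
  obtain ⟨φ, hφs, hφt⟩ := subseq_unbounded hC
  have hφt' : Tendsto (fun n => tk (φ n)) atTop atTop := hφt
  have huφ : Tendsto (fun n => uk (φ n)) atTop (𝓝 u) := huk.comp hφs.tendsto_atTop
  have hB2' := hB2 (fun n => tk (φ n))
    (fun n => (uk (φ n), (tk (φ n))⁻¹ • vk (φ n))) u hu0 hφt' huφ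
  have hev : ∀ᶠ n in atTop, 0 < tk (φ n) := hφt'.eventually_gt_atTop 0
  have heq : ∀ᶠ n in atTop,
      I (tk (φ n) • ((uk (φ n), (tk (φ n))⁻¹ • vk (φ n)) : H × W)) / tk (φ n) ^ 2
        = I (wk (φ n)) / tk (φ n) ^ 2 := by
    filter_upwards [hev] with n hn
    congr 2
    show (tk (φ n) • uk (φ n), tk (φ n) • ((tk (φ n))⁻¹ • vk (φ n))) = wk (φ n)
    rw [smul_inv_smul₀ (ne_of_gt hn)]
  have hIt : Tendsto (fun n => I (wk (φ n)) / tk (φ n) ^ 2) atTop atTop :=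
    hB2'.congr' heq
  have h1 : ∀ᶠ n in atTop, 1 ≤ I (wk (φ n)) / tk (φ n) ^ 2 := hIt.eventually_ge_atTop 1
  have h2 : ∀ᶠ n in atTop, 1 ≤ tk (φ n) := hφt'.eventually_ge_atTop 1
  obtain ⟨n, hn1, hn2⟩ := (h1.and h2).exists
  have ht2 : 0 < tk (φ n) ^ 2 := by positivity
  have hI : tk (φ n) ^ 2 ≤ I (wk (φ n)) := by
    rw [le_div_iff₀ ht2, one_mul] at hn1
    exact hn1
  have hcc := hJc (φ n)
  have hJn := hJw (φ n)
  have : c ≤ tk (φ n) ^ 2 / 2 - I (wk (φ n)) := by rw [← hJn]; exact hcc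
  nlinarith

lemma sublim
    (hWrefl : Function.Surjective (NormedSpace.inclusionInDoubleDual ℝ W))
    (hJ : ∀ u : H × W, J u = 1 / 2 * ‖u.1‖ ^ 2 - I u)
    (hA1 : ∀ u : H × W, 0 ≤ I u)
    (hA2 : ∀ (u : ℕ → H × W) (l : H × W), TConv u l →
      I l ≤ Filter.liminf (fun n => I (u n)) atTop)
    (hB1 : ∀ u : ℕ → H × W, Tendsto (fun n => ‖u n‖) atTop atTop →
      Tendsto (fun n => ‖(u n).1‖ + I (u n)) atTop atTop)
    (hB2 : ∀ (t : ℕ → ℝ) (u : ℕ → H × W) (u₀ : H), u₀ ≠ 0 → Tendsto t atTop atTop →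
      Tendsto (fun n => (u n).1) atTop (𝓝 u₀) →
      Tendsto (fun n => I (t n • u n) / t n ^ 2) atTop atTop)
    (uk : ℕ → H) (hk1 : ∀ n, ‖uk n‖ = 1) (u : H) (hu : ‖u‖ = 1)
    (huk : Tendsto uk atTop (𝓝 u))
    (tk : ℕ → ℝ) (htk : ∀ n, 0 ≤ tk n) (vk : ℕ → W)
    (c : ℝ) (hc : 0 < c) (hJc : ∀ n, c ≤ J (tk n • uk n, vk n)) :
    ∃ (φ : ℕ → ℕ) (tS : ℝ) (vS : W) (iS : ℝ), StrictMono φ ∧ 0 ≤ tS ∧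
      Tendsto (fun n => tk (φ n)) atTop (𝓝 tS) ∧
      TConv (fun n => ((tk (φ n) • uk (φ n) : H), vk (φ n))) ((tS • u : H), vS) ∧
      Tendsto (fun n => I (tk (φ n) • uk (φ n), vk (φ n))) atTop (𝓝 iS) ∧
      I ((tS • u : H), vS) ≤ iS := by
  set wk : ℕ → H × W := fun n => (tk n • uk n, vk n) with hwk
  have hnorm1 : ∀ n, ‖(wk n).1‖ = tk n := by
    intro n
    show ‖tk n • uk n‖ = tk n
    rw [norm_smul, hk1 n, Real.norm_eq_abs, abs_of_nonneg (htk n), mul_one]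
  have hJw : ∀ n, J (wk n) = tk n ^ 2 / 2 - I (wk n) := fun n =>
    J_apply hJ (hk1 n) (htk n) (vk n)
  have hu0 : u ≠ 0 := by
    intro h0; rw [h0, norm_zero] at hu; exact one_ne_zero hu.symm
  have htb : ∃ C, ∀ n, tk n ≤ C :=
    tk_bdd hJ hB2 uk hk1 u hu huk tk htk vk c hc hJc
  obtain ⟨Tb, hTb⟩ := htb
  have hTb0 : ∀ n, tk n ^ 2 ≤ Tb ^ 2 := fun n => by nlinarith [htk n, hTb n]
  have hIub : ∀ n, I (wk n) ≤ Tb ^ 2 / 2 := by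
    intro n
    have h1 := hJc n
    have h2 := hJw n
    have : c ≤ tk n ^ 2 / 2 - I (wk n) := by rw [← h2]; exact h1
    nlinarith [hTb0 n]
  -- Step 2 : (wk) is bounded
  have hwb : ∃ B, ∀ n, ‖wk n‖ ≤ B := by
    by_contra hB
    obtain ⟨φ, hφs, hφn⟩ := subseq_unbounded (f := fun n => ‖wk n‖) hB
    have hφn' : Tendsto (fun n => ‖wk (φ n)‖) atTop atTop := hφn
    have hbig := hB1 (fun n => wk (φ n)) hφn'
    have hub : ∀ n, ‖(wk (φ n)).1‖ + I (wk (φ n)) ≤ Tb + Tb ^ 2 / 2 := fun n => by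
      rw [hnorm1 (φ n)]
      exact add_le_add (hTb _) (hIub _)
    obtain ⟨n, hn⟩ := (hbig.eventually_gt_atTop (Tb + Tb ^ 2 / 2)).exists
    linarith [hub n]
  obtain ⟨B, hBw⟩ := hwb
  have htkB : ∀ n, tk n ∈ Icc (0 : ℝ) Tb := fun n => ⟨htk n, hTb n⟩
  have hIB : ∀ n, I (wk n) ∈ Icc (0 : ℝ) (Tb ^ 2 / 2) := fun n => ⟨hA1 _, hIub n⟩
  have hvkB : ∀ n, ‖vk n‖ ≤ B := by
    intro n
    have h1 : ‖(wk n).2‖ ≤ ‖wk n‖ := norm_snd_le _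
    exact le_trans h1 (hBw n)
  -- Step 3 : extraction
  obtain ⟨tS, htSmem, φ1, hφ1, hφ1t⟩ :=
    tendsto_subseq_of_bounded (Metric.isBounded_Icc (0 : ℝ) Tb) htkB
  obtain ⟨iS, hiSmem, φ2, hφ2, hφ2t⟩ :=
    tendsto_subseq_of_bounded (Metric.isBounded_Icc (0 : ℝ) (Tb ^ 2 / 2))
      (fun n => hIB (φ1 n))
  obtain ⟨vS, φ3, hφ3, hφ3t⟩ := weak_seq_compact hWrefl (fun n => vk (φ1 (φ2 n))) B
    (fun n => hvkB _)
  set φ : ℕ → ℕ := fun n => φ1 (φ2 (φ3 n)) with hφdef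
  have hφmono : StrictMono φ := hφ1.comp (hφ2.comp hφ3)
  have htSnn : 0 ≤ tS := by
    rw [isClosed_Icc.closure_eq] at htSmem
    exact htSmem.1
  have htlim : Tendsto (fun n => tk (φ n)) atTop (𝓝 tS) :=
    hφ1t.comp (hφ2.comp hφ3).tendsto_atTop
  have hIlim : Tendsto (fun n => I (wk (φ n))) atTop (𝓝 iS) :=
    hφ2t.comp hφ3.tendsto_atTop
  have hfst : Tendsto (fun n => (tk (φ n) • uk (φ n) : H)) atTop (𝓝 (tS • u)) :=
    htlim.smul (huk.comp hφmono.tendsto_atTop)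
  have hTC : TConv (fun n => ((tk (φ n) • uk (φ n) : H), vk (φ n))) ((tS • u : H), vS) := by
    constructor
    · exact hfst
    · intro ψ
      exact hφ3t ψ
  have hliminf : I ((tS • u : H), vS) ≤ iS := by
    have h1 := hA2 (fun n => ((tk (φ n) • uk (φ n) : H), vk (φ n))) _ hTC
    have h2 : Filter.liminf (fun n => I ((tk (φ n) • uk (φ n) : H), vk (φ n))) atTop = iS :=
      hIlim.liminf_eq
    rw [h2] at h1
    exact h1
  exact ⟨φ, tS, vS, iS, hφmono, htSnn, htlim, hTC, hIlim, hliminf⟩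

lemma strictmax_unique {J : H × W → ℝ} (u : H) (w₁ w₂ : H × W)
    (h₁ : ∃ (t : ℝ) (v : W), 0 ≤ t ∧ w₁ = ((t • u : H), v))
    (h₂ : ∃ (t : ℝ) (v : W), 0 ≤ t ∧ w₂ = ((t • u : H), v))
    (hm₁ : ∀ (t' : ℝ) (v' : W), 0 ≤ t' → ((t' • u : H), v') ≠ w₁ → J ((t' • u : H), v') < J w₁)
    (hm₂ : ∀ (t' : ℝ) (v' : W), 0 ≤ t' → ((t' • u : H), v') ≠ w₂ → J ((t' • u : H), v') < J w₂) :
    w₁ = w₂ := by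
  by_contra hne
  obtain ⟨t1, v1, ht1, rfl⟩ := h₁
  obtain ⟨t2, v2, ht2, rfl⟩ := h₂
  have hA := hm₂ t1 v1 ht1 hne
  have hB := hm₁ t2 v2 ht2 (Ne.symm hne)
  linarith

lemma maxat_tendsto
    (hWrefl : Function.Surjective (NormedSpace.inclusionInDoubleDual ℝ W))
    (hJ : ∀ u : H × W, J u = 1 / 2 * ‖u.1‖ ^ 2 - I u)
    (hIC1 : ContDiff ℝ 1 I)
    (hA1 : ∀ u : H × W, 0 ≤ I u)
    (hA2 : ∀ (u : ℕ → H × W) (l : H × W), TConv u l →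
      I l ≤ Filter.liminf (fun n => I (u n)) atTop)
    (hA3 : ∀ (u : ℕ → H × W) (l : H × W), TConv u l →
      Tendsto (fun n => I (u n)) atTop (𝓝 (I l)) → Tendsto u atTop (𝓝 l))
    (hB1 : ∀ u : ℕ → H × W, Tendsto (fun n => ‖u n‖) atTop atTop →
      Tendsto (fun n => ‖(u n).1‖ + I (u n)) atTop atTop)
    (hB2 : ∀ (t : ℕ → ℝ) (u : ℕ → H × W) (u₀ : H), u₀ ≠ 0 → Tendsto t atTop atTop →
      Tendsto (fun n => (u n).1) atTop (𝓝 u₀) →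
      Tendsto (fun n => I (t n • u n) / t n ^ 2) atTop atTop)
    {a : ℝ} (hapos : 0 < a)
    (uk : ℕ → H) (hk1 : ∀ n, ‖uk n‖ = 1) (u : H) (hu : ‖u‖ = 1)
    (hlim : Tendsto uk atTop (𝓝 u))
    (w : ℕ → H × W) (hw : ∀ n, MaxAt J a (uk n) (w n))
    (wS : H × W) (hwS : MaxAt J a u wS) :
    Tendsto w atTop (𝓝 wS) := by
  apply tendsto_of_subseq_tendsto
  intro ns hns
  choose T V hT hrep using fun m => (hw m).1
  set tk : ℕ → ℝ := fun k => T (ns k) with htkdef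
  set vk : ℕ → W := fun k => V (ns k) with hvkdef
  set uks : ℕ → H := fun k => uk (ns k) with huksdef
  have hukslim : Tendsto uks atTop (𝓝 u) := hlim.comp hns
  have hJc : ∀ k, a ≤ J (tk k • uks k, vk k) := by
    intro k
    have h1 := (hw (ns k)).2.1
    rw [hrep (ns k)] at h1
    exact h1
  obtain ⟨φ, tS, vS, iS, hφmono, htSnn, htlim, hTC, hIlim, hIlb⟩ :=
    sublim hWrefl hJ hA1 hA2 hB1 hB2 uks (fun k => hk1 (ns k)) u hu hukslim
      tk (fun k => (hT (ns k)).le) vk a hapos hJc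
  obtain ⟨tb, vb, htb, hrepS⟩ := hwS.1
  have hJcont : Continuous J := (differentiableJ hJ hIC1).continuous
  -- comparison with the transplanted maximizer
  have hcomp : ∀ k, J ((tb • uks k : H), vb) ≤ J (w (ns k)) := by
    intro k
    by_cases hne : ((tb • uks k : H), vb) = w (ns k)
    · rw [hne]
    · exact ((hw (ns k)).2.2.2 tb vb htb.le hne).le
  have hcomplim : Tendsto (fun k => J ((tb • uks k : H), vb)) atTop (𝓝 (J wS)) := by
    have h1 : Tendsto (fun k => (((tb • uks k : H), vb) : H × W)) atTop
        (𝓝 ((tb • u : H), vb)) := by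
      apply Tendsto.prodMk_nhds
      · exact hukslim.const_smul tb
      · exact tendsto_const_nhds
    have h2 := (hJcont.continuousAt (x := ((tb • u : H), vb))).tendsto.comp h1
    rw [← hrepS] at h2
    exact h2
  have hJwconv : Tendsto (fun k => J (w (ns (φ k)))) atTop (𝓝 (tS ^ 2 / 2 - iS)) := by
    have h1 : Tendsto (fun k => tk (φ k) ^ 2 / 2 - I (tk (φ k) • uks (φ k), vk (φ k))) atTop
        (𝓝 (tS ^ 2 / 2 - iS)) := ((htlim.pow 2).div_const 2).sub hIlim
    apply h1.congr
    intro k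
    rw [← J_apply hJ (hk1 (ns (φ k))) ((hT (ns (φ k))).le) (vk (φ k))]
    rw [← hrep (ns (φ k))]
  have h1 : J wS ≤ tS ^ 2 / 2 - iS :=
    le_of_tendsto_of_tendsto' (hcomplim.comp hφmono.tendsto_atTop) hJwconv
      (fun k => hcomp (φ k))
  set wH : H × W := ((tS • u : H), vS) with hwHdef
  have hJwH : J wH = tS ^ 2 / 2 - I wH := J_apply hJ hu htSnn vS
  have h2 : J wH ≤ J wS := by
    by_cases hne : wH = wS
    · rw [hne]
    · exact (hwS.2.2.2 tS vS htSnn hne).le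
  have h3 : J wS ≤ J wH := by
    rw [hJwH]
    linarith
  have heqJ : J wH = J wS := le_antisymm h2 h3
  have hwHeq : wH = wS := by
    by_contra hne
    have := hwS.2.2.2 tS vS htSnn hne
    rw [← hwHdef] at this
    linarith
  have hIeq : I wH = iS := by
    have h4 : tS ^ 2 / 2 - I wH ≤ tS ^ 2 / 2 - iS := by
      rw [← hJwH, heqJ]; exact h1
    linarith
  have hIconv : Tendsto (fun k => I (tk (φ k) • uks (φ k), vk (φ k))) atTop (𝓝 (I wH)) := by
    rw [hIeq]; exact hIlim
  have hstrong := hA3 (fun k => ((tk (φ k) • uks (φ k) : H), vk (φ k))) wH hTC hIconv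
  refine ⟨φ, ?_⟩
  have hfe : (fun k => w (ns (φ k))) = fun k => ((tk (φ k) • uks (φ k) : H), vk (φ k)) :=
    funext fun k => hrep (ns (φ k))
  rw [hfe, ← hwHeq]
  exact hstrong

lemma exists_max
    (hWrefl : Function.Surjective (NormedSpace.inclusionInDoubleDual ℝ W))
    (hJ : ∀ u : H × W, J u = 1 / 2 * ‖u.1‖ ^ 2 - I u)
    (hIC1 : ContDiff ℝ 1 I)
    (hA1 : ∀ u : H × W, 0 ≤ I u)
    (hA2 : ∀ (u : ℕ → H × W) (l : H × W), TConv u l →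
      I l ≤ Filter.liminf (fun n => I (u n)) atTop)
    (hB1 : ∀ u : ℕ → H × W, Tendsto (fun n => ‖u n‖) atTop atTop →
      Tendsto (fun n => ‖(u n).1‖ + I (u n)) atTop atTop)
    (hB2 : ∀ (t : ℕ → ℝ) (u : ℕ → H × W) (u₀ : H), u₀ ≠ 0 → Tendsto t atTop atTop →
      Tendsto (fun n => (u n).1) atTop (𝓝 u₀) →
      Tendsto (fun n => I (t n • u n) / t n ^ 2) atTop atTop)
    (hB3 : ∀ u ∈ NehariPankov J, ∀ t : ℝ, 0 ≤ t → ∀ v : W, t • u + ((0 : H), v) ≠ u →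
      (t ^ 2 - 1) / 2 * fderiv ℝ I u u + t * fderiv ℝ I u ((0 : H), v)
        + I u - I (t • u + ((0 : H), v)) < 0)
    {r a : ℝ} (hr : 0 < r)
    (ha : a = sInf {c : ℝ | ∃ h : H, ‖h‖ = r ∧ c = J (h, (0 : W))}) (hapos : 0 < a)
    (u : H) (hu : ‖u‖ = 1) :
    ∃ w : H × W, MaxAt J a u w := by
  have hJle : ∀ (t : ℝ) (v : W), 0 ≤ t → J ((t • u : H), v) ≤ t ^ 2 / 2 := by
    intro t v ht
    rw [J_apply hJ hu ht v]
    linarith [hA1 ((t • u : H), v)]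
  set S : Set ℝ := {c : ℝ | ∃ (t : ℝ) (v : W), 0 ≤ t ∧ c = J ((t • u : H), v)} with hSdef
  have hSne : S.Nonempty := ⟨J ((r • u : H), 0), r, 0, hr.le, rfl⟩
  have hSb : BddAbove S := by
    by_contra hb
    rw [not_bddAbove_iff] at hb
    have hseq : ∀ n : ℕ, ∃ (t : ℝ) (v : W), 0 ≤ t ∧ ((n : ℝ) + 1) < J ((t • u : H), v) := by
      intro n
      obtain ⟨c', hc'S, hc'⟩ := hb ((n : ℝ) + 1)
      obtain ⟨t, v, ht, rfl⟩ := hc'S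
      exact ⟨t, v, ht, hc'⟩
    choose tk vk htk hJk using hseq
    have hJc : ∀ n, (1 : ℝ) ≤ J (tk n • u, vk n) := by
      intro n
      have := hJk n
      have hn0 : (0:ℝ) ≤ (n:ℝ) := Nat.cast_nonneg n
      linarith
    obtain ⟨C, hC⟩ := tk_bdd hJ hB2 (fun _ => u) (fun _ => hu) u hu tendsto_const_nhds
      tk htk vk 1 one_pos hJc
    obtain ⟨n, hn⟩ := exists_nat_gt (C ^ 2 / 2)
    have h1 := hJk n
    have h2 := hJle (tk n) (vk n) (htk n)
    have h3 : tk n ^ 2 ≤ C ^ 2 := by nlinarith [htk n, hC n]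
    have hn0 : (0:ℝ) ≤ (n:ℝ) := Nat.cast_nonneg n
    linarith
  set m := sSup S with hmdef
  have hru : ‖(r • u : H)‖ = r := by
    rw [norm_smul, hu, Real.norm_eq_abs, abs_of_pos hr, mul_one]
  have haJ : a ≤ J ((r • u : H), 0) := a_le ha hapos (r • u) hru
  have hm : a ≤ m := le_trans haJ (le_csSup hSb ⟨r, 0, hr.le, rfl⟩)
  -- maximizing sequence
  have hseq : ∀ n : ℕ, ∃ (t : ℝ) (v : W), 0 ≤ t ∧
      m - (a / 2) * (1 / (n + 1)) < J ((t • u : H), v) := by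
    intro n
    have hlt : m - (a / 2) * (1 / (n + 1)) < m := by
      have : (0:ℝ) < (a / 2) * (1 / (n + 1)) := by positivity
      linarith
    obtain ⟨c', hc'S, hc'⟩ := exists_lt_of_lt_csSup hSne hlt
    obtain ⟨t, v, ht, rfl⟩ := hc'S
    exact ⟨t, v, ht, hc'⟩
  choose tk vk htk hJk using hseq
  have hJc : ∀ n, a / 2 ≤ J (tk n • u, vk n) := by
    intro n
    have h1 := hJk n
    have h2 : (1 : ℝ) / (n + 1) ≤ 1 := by
      rw [div_le_one (by positivity)]
      linarith [Nat.cast_nonneg (α := ℝ) n]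
    have h3 : (a / 2) * (1 / (n + 1)) ≤ a / 2 * 1 := by
      apply mul_le_mul_of_nonneg_left h2 (by linarith)
    linarith
  obtain ⟨φ, tS, vS, iS, hφmono, htSnn, htlim, hTC, hIlim, hIlb⟩ :=
    sublim hWrefl hJ hA1 hA2 hB1 hB2 (fun _ => u) (fun _ => hu) u hu tendsto_const_nhds
      tk htk vk (a / 2) (by linarith) hJc
  have hJupper : ∀ n, J ((tk n • u : H), vk n) ≤ m := fun n =>
    le_csSup hSb ⟨tk n, vk n, htk n, rfl⟩
  -- J (wk (φ n)) → tS^2/2 - iS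
  have hJconv : Tendsto (fun n => J ((tk (φ n) • u : H), vk (φ n))) atTop
      (𝓝 (tS ^ 2 / 2 - iS)) := by
    have h1 : Tendsto (fun n => tk (φ n) ^ 2 / 2 - I (tk (φ n) • u, vk (φ n))) atTop
        (𝓝 (tS ^ 2 / 2 - iS)) := (((htlim.pow 2).div_const 2).sub hIlim)
    apply h1.congr
    intro n
    rw [J_apply hJ hu (htk (φ n)) (vk (φ n))]
  -- J (wk (φ n)) → m by squeeze
  have hJconv2 : Tendsto (fun n => J ((tk (φ n) • u : H), vk (φ n))) atTop (𝓝 m) := by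
    have hlow : Tendsto (fun n : ℕ => m - (a / 2) * (1 / (φ n + 1))) atTop (𝓝 m) := by
      have h0 : Tendsto (fun n : ℕ => 1 / ((n : ℝ) + 1)) atTop (𝓝 0) :=
        tendsto_one_div_add_atTop_nhds_zero_nat
      have h1 : Tendsto (fun n : ℕ => 1 / ((φ n : ℝ) + 1)) atTop (𝓝 0) :=
        h0.comp hφmono.tendsto_atTop
      have h2 : Tendsto (fun n : ℕ => m - (a / 2) * (1 / ((φ n : ℝ) + 1))) atTop
          (𝓝 (m - (a / 2) * 0)) := tendsto_const_nhds.sub (h1.const_mul (a / 2))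
      simpa using h2
    apply tendsto_of_tendsto_of_tendsto_of_le_of_le hlow tendsto_const_nhds
      (fun n => (hJk (φ n)).le) (fun n => hJupper (φ n))
  have hmeq : tS ^ 2 / 2 - iS = m := tendsto_nhds_unique hJconv hJconv2
  set w : H × W := ((tS • u : H), vS) with hwdef
  have hJw : J w = tS ^ 2 / 2 - I w := J_apply hJ hu htSnn vS
  have hJwm : m ≤ J w := by
    rw [hJw]
    linarith [hIlb]
  have haw : a ≤ J w := le_trans hm hJwm
  have hmax : ∀ (t' : ℝ) (v' : W), 0 ≤ t' → J ((t' • u : H), v') ≤ J w := fun t' v' ht' =>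
    le_trans (le_csSup hSb ⟨t', v', ht', rfl⟩) hJwm
  have htSpos : 0 < tS := by
    rcases htSnn.lt_or_eq with h | h
    · exact h
    · exfalso
      have h1 : J w = (0:ℝ) ^ 2 / 2 - I ((0:ℝ) • u, vS) := by
        rw [hwdef, ← h]
        exact J_apply hJ hu le_rfl vS
    
      have h2 := hA1 (((0:ℝ) • u : H), vS)
      have : J w ≤ 0 := by rw [h1]; simp; linarith
      linarith
  -- criticality
  set A : ℝ × W →L[ℝ] H × W :=
    ((ContinuousLinearMap.fst ℝ ℝ W).smulRight u).prod (ContinuousLinearMap.snd ℝ ℝ W)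
    with hAdef
  have hAp : ∀ p : ℝ × W, A p = ((p.1 • u : H), p.2) := fun p => rfl
  set g : ℝ × W → ℝ := fun p => J (A p) with hgdef
  have hgval : ∀ p : ℝ × W, g p = J ((p.1 • u : H), p.2) := fun p => rfl
  have hAw : A (tS, vS) = w := rfl
  have hgmax : IsLocalMax g (tS, vS) := by
    have hnhds : {p : ℝ × W | 0 < p.1} ∈ 𝓝 ((tS, vS) : ℝ × W) :=
      (isOpen_lt continuous_const continuous_fst).mem_nhds htSpos
    filter_upwards [hnhds] with p hp
    show g p ≤ g (tS, vS)
    rw [hgval p]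
    have hgw : g (tS, vS) = J w := rfl
    rw [hgw]
    exact hmax p.1 p.2 (le_of_lt hp)
  have hg0 : fderiv ℝ g (tS, vS) = 0 := hgmax.fderiv_eq_zero
  have hgd : HasFDerivAt g ((fderiv ℝ J w).comp A) (tS, vS) := by
    have h1 : HasFDerivAt J (fderiv ℝ J w) w :=
      (differentiableJ hJ hIC1 w).hasFDerivAt
    exact h1.comp (tS, vS) A.hasFDerivAt
  have hcrit : Crit J u w := by
    intro s z
    have h3 : (fderiv ℝ J w).comp A = 0 := by rw [← hgd.fderiv]; exact hg0
    have h4 := congrArg (fun T : ℝ × W →L[ℝ] ℝ => T (s, z)) h3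
    simp only [ContinuousLinearMap.comp_apply, ContinuousLinearMap.zero_apply] at h4
    rw [key_eq]
    exact h4
  have hstrict := lemU hJ hIC1 hB3 hu htSpos (lt_of_lt_of_le hapos haw) hcrit
  exact ⟨w, ⟨tS, vS, htSpos, rfl⟩, haw, hcrit, hstrict⟩

lemma crit_neg {u0 : H} {w : H × W} (h : Crit J u0 w) : Crit J (-u0) w := by
  intro s z
  have heq : s • (((-u0 : H), (0 : W)) : H × W) + ((0 : H), z)
      = (-s) • ((u0, 0) : H × W) + ((0 : H), z) := by
    rw [key_eq, key_eq, smul_neg, neg_smul]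
  rw [heq]
  exact h (-s) z

lemma crit_neg' {u0 : H} {w : H × W} (h : Crit J (-u0) w) : Crit J u0 w := by
  have h2 := crit_neg (J := J) h
  rwa [neg_neg] at h2


end MainDev

/-- **Proposition 4.1.** Under (A1)-(A4), (B1)-(B3), for every `u ∈ SX⁺` the functional `J`
constrained to `ℝu + X̃` has precisely two critical points with positive energy,
`u₁ = t₁u + v₁` and `u₂ = t₂u + v₂` with `t₁ > 0 > t₂`; `u₁` (resp. `u₂`) is the unique
global maximum of `J` on `ℝ⁺u + X̃` (resp. `ℝ⁻u + X̃`), and both depend continuously on `u`. -/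
theorem statement0
    (I J : H × W → ℝ)
    (hWrefl : Function.Surjective (NormedSpace.inclusionInDoubleDual ℝ W))
    (hJ : ∀ u : H × W, J u = 1 / 2 * ‖u.1‖ ^ 2 - I u)
    -- (A1)
    (hIC1 : ContDiff ℝ 1 I) (hA1 : ∀ u : H × W, 0 ≤ I u) (hI0 : I 0 = 0)
    -- (A2)
    (hA2 : ∀ (u : ℕ → H × W) (l : H × W), TConv u l →
      I l ≤ Filter.liminf (fun n => I (u n)) atTop)
    -- (A3)
    (hA3 : ∀ (u : ℕ → H × W) (l : H × W), TConv u l →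
      Tendsto (fun n => I (u n)) atTop (𝓝 (I l)) → Tendsto u atTop (𝓝 l))
    -- (A4)
    (r a : ℝ) (hr : 0 < r)
    (ha : a = sInf {c : ℝ | ∃ h : H, ‖h‖ = r ∧ c = J (h, (0 : W))}) (hapos : 0 < a)
    -- (B1)
    (hB1 : ∀ u : ℕ → H × W, Tendsto (fun n => ‖u n‖) atTop atTop →
      Tendsto (fun n => ‖(u n).1‖ + I (u n)) atTop atTop)
    -- (B2)
    (hB2 : ∀ (t : ℕ → ℝ) (u : ℕ → H × W) (u₀ : H), u₀ ≠ 0 → Tendsto t atTop atTop →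
      Tendsto (fun n => (u n).1) atTop (𝓝 u₀) →
      Tendsto (fun n => I (t n • u n) / t n ^ 2) atTop atTop)
    -- (B3)
    (hB3 : ∀ u ∈ NehariPankov J, ∀ t : ℝ, 0 ≤ t → ∀ v : W, t • u + ((0 : H), v) ≠ u →
      (t ^ 2 - 1) / 2 * fderiv ℝ I u u + t * fderiv ℝ I u ((0 : H), v)
        + I u - I (t • u + ((0 : H), v)) < 0)
    :
    ∃ U₁ U₂ : {u : H // ‖u‖ = 1} → H × W,
      Continuous U₁ ∧ Continuous U₂ ∧
      ∀ u : {u : H // ‖u‖ = 1},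
        {w : H × W | (∃ (t : ℝ) (v : W), w = t • (((u : H), (0 : W)) : H × W) + ((0 : H), v)) ∧
            0 < J w ∧
            ∀ (s : ℝ) (v : W),
              fderiv ℝ J w (s • (((u : H), (0 : W)) : H × W) + ((0 : H), v)) = 0}
          = {U₁ u, U₂ u} ∧
        U₁ u ≠ U₂ u ∧
        (∃ (t₁ : ℝ) (v₁ : W), 0 < t₁ ∧
          U₁ u = t₁ • (((u : H), (0 : W)) : H × W) + ((0 : H), v₁)) ∧
        (∃ (t₂ : ℝ) (v₂ : W), t₂ < 0 ∧
          U₂ u = t₂ • (((u : H), (0 : W)) : H × W) + ((0 : H), v₂)) ∧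
        (∀ w : H × W,
          (∃ (t : ℝ) (v : W), 0 ≤ t ∧ w = t • (((u : H), (0 : W)) : H × W) + ((0 : H), v)) →
          w ≠ U₁ u → J w < J (U₁ u)) ∧
        (∀ w : H × W,
          (∃ (t : ℝ) (v : W), t ≤ 0 ∧ w = t • (((u : H), (0 : W)) : H × W) + ((0 : H), v)) →
          w ≠ U₂ u → J w < J (U₂ u)) := by
  classical
  have hex : ∀ u : {u : H // ‖u‖ = 1}, ∃ w : H × W, MaxAt J a (u : H) w := fun u =>
    exists_max hWrefl hJ hIC1 hA1 hA2 hB1 hB2 hB3 hr ha hapos (u : H) u.2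
  choose F hF using hex
  have hneg : ∀ u : {u : H // ‖u‖ = 1}, ‖(-(u : H) : H)‖ = 1 := fun u => by
    rw [norm_neg]; exact u.2
  set neg : {u : H // ‖u‖ = 1} → {u : H // ‖u‖ = 1} := fun u => ⟨-(u : H), hneg u⟩ with hnegdef
  have hnegcont : Continuous neg := by
    apply Continuous.subtype_mk
    exact continuous_subtype_val.neg
  have hFcont : Continuous F := by
    have hseq : SeqContinuous F := by
      intro x p hx
      have hval : Tendsto (fun n => ((x n : H))) atTop (𝓝 (p : H)) :=
        (continuous_subtype_val.tendsto p).comp hx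
      exact maxat_tendsto hWrefl hJ hIC1 hA1 hA2 hA3 hB1 hB2 hapos (fun n => (x n : H)) (fun n => (x n).2) (p : H) p.2 hval
        (fun n => F (x n)) (fun n => hF (x n)) (F p) (hF p)
    exact hseq.continuous
  refine ⟨F, F ∘ neg, hFcont, hFcont.comp hnegcont, fun u => ?_⟩
  set u0 : H := (u : H) with hu0def
  have hu0 : ‖u0‖ = 1 := u.2
  have hu0ne : u0 ≠ 0 := by
    intro h0; rw [h0, norm_zero] at hu0; exact one_ne_zero hu0.symm
  have hnegu : ((neg u : {u : H // ‖u‖ = 1}) : H) = -u0 := rfl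
  obtain ⟨t1, v1, ht1, hw1⟩ := (hF u).1
  obtain ⟨t2, v2, ht2, hw2⟩ := (hF (neg u)).1
  rw [hnegu] at hw2
  have hJ1pos : 0 < J (F u) := lt_of_lt_of_le hapos (hF u).2.1
  have hJ2pos : 0 < J (F (neg u)) := lt_of_lt_of_le hapos (hF (neg u)).2.1
  have hcrit1 : Crit J u0 (F u) := (hF u).2.2.1
  have hcrit2 : Crit J (-u0) (F (neg u)) := (hF (neg u)).2.2.1
  have hmax1 := (hF u).2.2.2
  have hmax2 := (hF (neg u)).2.2.2
  -- strict max of w₂ stated over -u0 : rewrite base vector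
  refine ⟨?_, ?_, ?_, ?_, ?_, ?_⟩
  · -- set equality
    ext w
    simp only [Set.mem_setOf_eq, Set.mem_insert_iff, Set.mem_singleton_iff]
    constructor
    · rintro ⟨⟨t, v, hw⟩, hJpos, hcrit⟩
      rw [key_eq] at hw
      have hcritw : Crit J u0 w := hcrit
      rcases lt_trichotomy t 0 with hlt | hteq | hgt
      · -- w = U₂ u
        right
        have hww : w = (((-t) • (-u0) : H), v) := by rw [hw, neg_smul_neg]
        have hposw : 0 < J (((-t) • (-u0) : H), v) := by rw [← hww]; exact hJpos
        have hcritw2 : Crit J (-u0) (((-t) • (-u0) : H), v) := by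
          rw [← hww]; exact crit_neg hcritw
        have hstrict := lemU hJ hIC1 hB3 (by rw [norm_neg]; exact hu0) (by linarith) hposw hcritw2
        refine strictmax_unique (J := J) (-u0) w (F (neg u)) ⟨-t, v, by linarith, hww⟩
          ⟨t2, v2, ht2.le, hw2⟩ ?_ ?_
        · intro t' v' ht' hne
          rw [hww] at hne ⊢
          exact hstrict t' v' ht' hne
        · exact hmax2
      · exfalso
        rw [hteq] at hw
        have hJw : J ((0:ℝ) • u0, v) = (0:ℝ) ^ 2 / 2 - I ((0:ℝ) • u0, v) :=
          J_apply hJ hu0 le_rfl v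
        have := hA1 (((0:ℝ) • u0 : H), v)
        rw [hw] at hJpos
        rw [hJw] at hJpos
        have h00 : (0:ℝ) ^ 2 / 2 = 0 := by norm_num
        rw [h00] at hJpos
        linarith
      · -- w = U₁ u
        left
        have hposw : 0 < J ((t • u0 : H), v) := by rw [← hw]; exact hJpos
        have hcritw1 : Crit J u0 ((t • u0 : H), v) := by rw [← hw]; exact hcritw
        have hstrict := lemU hJ hIC1 hB3 hu0 hgt hposw hcritw1
        refine strictmax_unique (J := J) u0 w (F u) ⟨t, v, hgt.le, hw⟩ ⟨t1, v1, ht1.le, hw1⟩ ?_ hmax1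
        intro t' v' ht' hne
        rw [hw] at hne ⊢
        exact hstrict t' v' ht' hne
    · rintro (rfl | rfl)
      · exact ⟨⟨t1, v1, by rw [key_eq]; exact hw1⟩, hJ1pos, hcrit1⟩
      · refine ⟨⟨-t2, v2, ?_⟩, hJ2pos, ?_⟩
        · show F (neg u) = -t2 • ((u0, 0) : H × W) + ((0 : H), v2)
          rw [key_eq, hw2, smul_neg, neg_smul]
        · exact crit_neg' hcrit2
  · -- U₁ u ≠ U₂ u
    intro heq
    have h1 := congrArg Prod.fst heq
    simp only [Function.comp_apply] at h1
    rw [hw1, hw2] at h1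
    have h1' : (t1 • u0 : H) = t2 • (-u0) := h1
    have h2 : (t1 • u0 : H) = (-t2) • u0 := by
      rw [h1']
      show (t2 • (-u0) : H) = (-t2) • u0
      rw [smul_neg, neg_smul]
    have h3 : ((t1 + t2) • u0 : H) = 0 := by
      rw [add_smul]
      rw [h2, neg_smul]
      abel
    rcases smul_eq_zero.mp h3 with h | h
    · linarith
    · exact hu0ne h
  · exact ⟨t1, v1, ht1, by rw [key_eq]; exact hw1⟩
  · refine ⟨-t2, v2, by linarith, ?_⟩
    show F (neg u) = -t2 • ((u0, 0) : H × W) + ((0 : H), v2)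
    rw [key_eq, hw2, smul_neg, neg_smul]
  · intro w hwform hne
    obtain ⟨t, v, ht, hw⟩ := hwform
    rw [key_eq] at hw
    rw [hw]
    apply hmax1 t v ht
    rw [← hw]
    exact hne
  · intro w hwform hne
    obtain ⟨t, v, ht, hw⟩ := hwform
    rw [key_eq] at hw
    have hww : w = (((-t) • (-u0) : H), v) := by rw [hw, neg_smul_neg]
    rw [hww]
    apply hmax2 (-t) v (by linarith)
    rw [← hww]
    exact hne
end
end

section
/- Assume (A1)-(A4), (B1), (B2) and (B4). Then for every u ∈ X⁺ there is a unique point m(u) ∈ M with m(u)⁺ = u, and m(u) is the unique global maximum of J on u + X̃. Moreover the map m : X⁺ → M is a homeomorphism whose inverse is the map M ∋ u ↦ u⁺ ∈ X⁺. -/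
open Filter Topology

section AuxWeakCompactness

open TopologicalSpace

/-- The dual of a real normed space, with its instances taken from the norm. -/
abbrev MyDual (E : Type*) [NormedAddCommGroup E] [NormedSpace ℝ E] : Type _ := StrongDual ℝ E

theorem my_exists_dual_annihilator {E : Type*} [NormedAddCommGroup E] [NormedSpace ℝ E]
    (Y : Submodule ℝ E) (hY : IsClosed (Y : Set E)) {x : E} (hx : x ∉ Y) :
    ∃ f : E →L[ℝ] ℝ, (∀ y ∈ Y, f y = 0) ∧ f x ≠ 0 := by
  obtain ⟨f, u, hfa, hux⟩ := geometric_hahn_banach_closed_point Y.convex hY hx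
  have h0 : (0 : ℝ) < u := by simpa using hfa 0 (zero_mem Y)
  refine ⟨f, fun y hy => ?_, by linarith⟩
  by_contra h
  have := hfa (((u + 1) / (f y)) • y) (Y.smul_mem _ hy)
  rw [map_smul, smul_eq_mul, div_mul_cancel₀ _ h] at this
  linarith

theorem my_separable_of_dual_separable {E : Type*} [NormedAddCommGroup E] [NormedSpace ℝ E]
    [h : SeparableSpace (MyDual E)] :
    SeparableSpace E := by
  obtain ⟨f, hf⟩ := exists_dense_seq (MyDual E)
  have hx : ∀ n : ℕ, ∃ x : E, ‖x‖ ≤ 1 ∧ ‖f n‖ / 2 ≤ f n x := by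
    intro n
    rcases eq_or_ne (f n) 0 with h0 | h0
    · exact ⟨0, by simp [h0]⟩
    · have hlt : ‖f n‖ / 2 < ‖f n‖ := by
        have : 0 < ‖f n‖ := norm_pos_iff.2 h0
        linarith
      obtain ⟨x, hx1, hx2⟩ := (f n).exists_lt_apply_of_lt_opNorm hlt
      rcases le_or_gt 0 (f n x) with hp | hp
      · exact ⟨x, hx1.le, by rw [Real.norm_eq_abs, abs_of_nonneg hp] at hx2; linarith⟩
      · refine ⟨-x, by simpa using hx1.le, ?_⟩
        rw [Real.norm_eq_abs, abs_of_neg hp] at hx2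
        simpa using hx2.le
  choose x hx1 hx2 using hx
  set Y := (Submodule.span ℝ (Set.range x)).topologicalClosure with hYdef
  have hYsep : IsSeparable (Y : Set E) :=
    ((Set.countable_range x).isSeparable.span).closure
  by_cases htop : ∀ z : E, z ∈ Y
  · refine (isSeparable_univ_iff.1 ?_)
    exact hYsep.mono fun z _ => htop z
  · push_neg at htop
    obtain ⟨z, hz⟩ := htop
    obtain ⟨g₀, hg₀Y, hg₀z⟩ := my_exists_dual_annihilator Y
      (Submodule.isClosed_topologicalClosure _) hz
    have hg₀ : g₀ ≠ 0 := fun hc => hg₀z (by simp [hc])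
    set g : MyDual E := ‖g₀‖⁻¹ • g₀ with hgdef
    have hgnorm : ‖g‖ = 1 := by
      rw [hgdef, norm_smul, norm_inv, norm_norm, inv_mul_cancel₀ (norm_ne_zero_iff.2 hg₀)]
    obtain ⟨n, hn⟩ := hf.exists_dist_lt g (by norm_num : (0:ℝ) < 1/4)
    have hdist : ‖f n - g‖ < 1/4 := by rwa [dist_eq_norm, norm_sub_rev] at hn
    have hfn : 3/4 < ‖f n‖ := by
      have := norm_sub_norm_le (f n) g
      rw [hgnorm] at this; linarith [abs_le.1 (abs_norm_sub_norm_le (f n) g)]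
    have hgx : g (x n) = 0 := by
      have hmem : x n ∈ Y :=
        Submodule.le_topologicalClosure _ (Submodule.subset_span (Set.mem_range_self n))
      simp [hgdef, hg₀Y _ hmem]
    have hsmall : f n (x n) ≤ 1/4 := by
      have : f n (x n) - g (x n) ≤ ‖f n - g‖ * ‖x n‖ := by
        calc f n (x n) - g (x n) = (f n - g) (x n) := by simp
        _ ≤ ‖(f n - g) (x n)‖ := le_abs_self _
        _ ≤ ‖f n - g‖ * ‖x n‖ := (f n - g).le_opNorm _
      have hb : ‖f n - g‖ * ‖x n‖ ≤ 1/4 * 1 := by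
        apply mul_le_mul hdist.le (hx1 n) (norm_nonneg _) (by norm_num)
      rw [hgx] at this; linarith
    linarith [hx2 n]

theorem my_subspace_reflexive {E : Type*} [NormedAddCommGroup E] [NormedSpace ℝ E]
    (hrefl : Function.Surjective (NormedSpace.inclusionInDoubleDual ℝ E))
    (Y : Submodule ℝ E) (hY : IsClosed (Y : Set E)) :
    Function.Surjective (NormedSpace.inclusionInDoubleDual ℝ ↥Y) := by
  intro ξ
  set ρ : MyDual E →L[ℝ] MyDual ↥Y :=
    (ContinuousLinearMap.compL ℝ ↥Y E ℝ).flip Y.subtypeL with hρ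
  have hρ_apply : ∀ (φ : MyDual E) (y : ↥Y), ρ φ y = φ y := fun _ _ => rfl
  obtain ⟨w, hw⟩ := hrefl (ξ.comp ρ)
  have hwY : w ∈ Y := by
    by_contra hwn
    obtain ⟨f, hfY, hfw⟩ := my_exists_dual_annihilator Y hY hwn
    have hρf : ρ f = 0 := by ext y; exact hfY y y.2
    have : f w = 0 := by
      have h1 : NormedSpace.inclusionInDoubleDual ℝ E w f = ξ (ρ f) := by rw [hw]; rfl
      rw [NormedSpace.dual_def, hρf, map_zero] at h1
      exact h1
    exact hfw this
  refine ⟨⟨w, hwY⟩, ?_⟩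
  ext ψ
  obtain ⟨φ, hφ, -⟩ := exists_extension_norm_eq Y ψ
  have hρφ : ρ φ = ψ := by ext y; exact hφ y
  have h1 : NormedSpace.inclusionInDoubleDual ℝ E w φ = ξ (ρ φ) := by rw [hw]; rfl
  rw [NormedSpace.dual_def, hρφ] at h1
  rw [NormedSpace.dual_def, ← h1]
  exact (hφ ⟨w, hwY⟩).symm

/-- Bounded sequences in a reflexive space have weakly convergent subsequences. -/
theorem my_weak_seq_compact {E : Type*} [NormedAddCommGroup E] [NormedSpace ℝ E]
    [CompleteSpace E]
    (hrefl : Function.Surjective (NormedSpace.inclusionInDoubleDual ℝ E))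
    (v : ℕ → E) (B : ℝ) (hB : ∀ n, ‖v n‖ ≤ B) :
    ∃ (σ : ℕ → ℕ) (l : E), StrictMono σ ∧
      ∀ φ : E →L[ℝ] ℝ, Tendsto (fun n => φ (v (σ n))) atTop (𝓝 (φ l)) := by
  classical
  set B' : ℝ := max B 0 with hB'def
  have hB'0 : 0 ≤ B' := le_max_right _ _
  have hvB : ∀ n, ‖v n‖ ≤ B' := fun n => (hB n).trans (le_max_left _ _)
  set Y : Submodule ℝ E := (Submodule.span ℝ (Set.range v)).topologicalClosure with hYdef
  have hYc : IsClosed (Y : Set E) := Submodule.isClosed_topologicalClosure _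
  have hmem : ∀ n, v n ∈ Y := fun n =>
    Submodule.le_topologicalClosure _ (Submodule.subset_span (Set.mem_range_self n))
  set vt : ℕ → ↥Y := fun n => ⟨v n, hmem n⟩ with hvt
  have hvtB : ∀ n, ‖vt n‖ ≤ B' := fun n => hvB n
  haveI hYsep : SeparableSpace ↥Y := by
    have h1 : IsSeparable (Y : Set E) := by
      rw [hYdef, Submodule.topologicalClosure_coe]
      exact ((Set.countable_range v).isSeparable.span).closure
    exact h1.separableSpace
  haveI hYddsep : SeparableSpace (MyDual (MyDual ↥Y)) := by
    have hs := my_subspace_reflexive hrefl Y hYc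
    have h2 : IsSeparable (Set.univ : Set (MyDual (MyDual ↥Y))) := by
      rw [← Set.range_eq_univ.2 hs]
      exact isSeparable_range (NormedSpace.inclusionInDoubleDual ℝ ↥Y).continuous
    exact isSeparable_univ_iff.1 h2
  haveI hYdsep : SeparableSpace (MyDual ↥Y) := my_separable_of_dual_separable (E := MyDual ↥Y)
  haveI : Nonempty (MyDual ↥Y) := ⟨0⟩
  obtain ⟨ψ, hψ⟩ := exists_dense_seq (MyDual ↥Y)
  -- diagonal extraction via sequential compactness of a compact metrizable product
  set T : ℕ → (ℕ → ℝ) := fun n j => ψ j (vt n) with hT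
  set S : Set (ℕ → ℝ) := Set.pi Set.univ fun j => Set.Icc (-(‖ψ j‖ * B')) (‖ψ j‖ * B') with hS
  have hTS : ∀ n, T n ∈ S := by
    intro n j _
    have h1 : |ψ j (vt n)| ≤ ‖ψ j‖ * B' := by
      calc |ψ j (vt n)| = ‖ψ j (vt n)‖ := rfl
        _ ≤ ‖ψ j‖ * ‖vt n‖ := (ψ j).le_opNorm _
        _ ≤ ‖ψ j‖ * B' := by
            exact mul_le_mul_of_nonneg_left (hvtB n) (norm_nonneg _)
    exact abs_le.1 h1
  have hScomp : IsCompact S := isCompact_univ_pi fun j => isCompact_Icc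
  obtain ⟨g, -, σ, hσ, hconv⟩ := hScomp.isSeqCompact hTS
  have hptwise : ∀ j, Tendsto (fun n => ψ j (vt (σ n))) atTop (𝓝 (g j)) := by
    intro j
    exact (tendsto_pi_nhds.1 hconv) j
  -- every functional converges along σ
  have hcauchy : ∀ φ : E →L[ℝ] ℝ, ∃ L : ℝ, Tendsto (fun n => φ (v (σ n))) atTop (𝓝 L) := by
    intro φ
    set ρφ : MyDual ↥Y := φ.comp Y.subtypeL with hρφ
    have key : CauchySeq fun n => φ (v (σ n)) := by
      rw [Metric.cauchySeq_iff]
      intro ε hε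
      have hε3 : 0 < ε / (3 * (B' + 1)) := by positivity
      obtain ⟨j, hj⟩ := hψ.exists_dist_lt ρφ hε3
      have happrox : ∀ n, |φ (v (σ n)) - ψ j (vt (σ n))| ≤ ε / 3 := by
        intro n
        have h1 : φ (v (σ n)) - ψ j (vt (σ n)) = (ρφ - ψ j) (vt (σ n)) := by
          simp [hρφ]; rfl
        rw [h1]
        calc |(ρφ - ψ j) (vt (σ n))| ≤ ‖ρφ - ψ j‖ * ‖vt (σ n)‖ := (ρφ - ψ j).le_opNorm _
          _ ≤ (ε / (3 * (B' + 1))) * B' := by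
              apply mul_le_mul _ (hvtB _) (norm_nonneg _) hε3.le
              rw [dist_eq_norm] at hj
              exact hj.le
          _ ≤ ε / 3 := by
              rw [div_mul_eq_mul_div, div_le_div_iff₀ (by positivity) (by norm_num)]
              ring_nf
              nlinarith [hε.le, hB'0]
      have hcs : CauchySeq fun n => ψ j (vt (σ n)) := (hptwise j).cauchySeq
      rw [Metric.cauchySeq_iff] at hcs
      obtain ⟨N, hN⟩ := hcs (ε / 3) (by linarith)
      refine ⟨N, fun m hm n hn => ?_⟩
      have h2 := hN m hm n hn
      rw [Real.dist_eq] at h2 ⊢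
      have e1 := happrox m
      have e2 := happrox n
      have : φ (v (σ m)) - φ (v (σ n)) =
          (φ (v (σ m)) - ψ j (vt (σ m))) + (ψ j (vt (σ m)) - ψ j (vt (σ n)))
            + (ψ j (vt (σ n)) - φ (v (σ n))) := by ring
      rw [this]
      calc |_ + _ + _| ≤ |φ (v (σ m)) - ψ j (vt (σ m))| + |ψ j (vt (σ m)) - ψ j (vt (σ n))|
            + |ψ j (vt (σ n)) - φ (v (σ n))| := by
              exact (abs_add_le _ _).trans (by gcongr; exact abs_add_le _ _)
        _ < ε := by
            rw [abs_sub_comm ((ψ j) (vt (σ n))) (φ (v (σ n)))]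
            linarith
    exact cauchySeq_tendsto_of_complete key
  choose Lf hLf using hcauchy
  have hadd : ∀ φ₁ φ₂ : E →L[ℝ] ℝ, Lf (φ₁ + φ₂) = Lf φ₁ + Lf φ₂ := by
    intro φ₁ φ₂
    refine tendsto_nhds_unique (hLf (φ₁ + φ₂)) ?_
    simpa using (hLf φ₁).add (hLf φ₂)
  have hsmul : ∀ (c : ℝ) (φ : E →L[ℝ] ℝ), Lf (c • φ) = c • Lf φ := by
    intro c φ
    refine tendsto_nhds_unique (hLf (c • φ)) ?_
    simpa using (hLf φ).const_mul c
  have hbound : ∀ φ : E →L[ℝ] ℝ, ‖Lf φ‖ ≤ B' * ‖φ‖ := by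
    intro φ
    have h1 : Tendsto (fun n => ‖φ (v (σ n))‖) atTop (𝓝 ‖Lf φ‖) := (hLf φ).norm
    refine le_of_tendsto h1 (Filter.Eventually.of_forall fun n => ?_)
    calc ‖φ (v (σ n))‖ ≤ ‖φ‖ * ‖v (σ n)‖ := φ.le_opNorm _
      _ ≤ ‖φ‖ * B' := mul_le_mul_of_nonneg_left (hvB _) (norm_nonneg _)
      _ = B' * ‖φ‖ := mul_comm _ _
  set ξ : MyDual (MyDual E) :=
    LinearMap.mkContinuous
      { toFun := Lf, map_add' := hadd, map_smul' := hsmul } B' hbound with hξ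
  obtain ⟨l, hl⟩ := hrefl ξ
  refine ⟨σ, l, hσ, fun φ => ?_⟩
  have h2 : φ l = Lf φ := by
    have := congrFun (congrArg DFunLike.coe hl) φ
    rw [NormedSpace.dual_def] at this
    exact this
  rw [h2]
  exact hLf φ

end AuxWeakCompactness

noncomputable section

variable {H W : Type*} [NormedAddCommGroup H] [InnerProductSpace ℝ H] [CompleteSpace H]
  [NormedAddCommGroup W] [NormedSpace ℝ W] [CompleteSpace W]

/-- **Existence and uniqueness of `m` and claim (i) of Theorem 4.6.** Under (A1)-(A4), (B1),
(B2), (B4), every `u ∈ X⁺` has a unique point `m(u) ∈ M` with `m(u)⁺ = u`, which is the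
unique global maximum of `J` on `u + X̃`, and `m : X⁺ → M` is a homeomorphism with inverse
`u ↦ u⁺`. -/
theorem statement9
    (I J : H × W → ℝ)
    (hWrefl : Function.Surjective (NormedSpace.inclusionInDoubleDual ℝ W))
    (hJ : ∀ u : H × W, J u = 1 / 2 * ‖u.1‖ ^ 2 - I u)
    -- (A1)
    (hIC1 : ContDiff ℝ 1 I) (hA1 : ∀ u : H × W, 0 ≤ I u) (hI0 : I 0 = 0)
    -- (A2)
    (hA2 : ∀ (u : ℕ → H × W) (l : H × W), TConv u l →
      I l ≤ Filter.liminf (fun n => I (u n)) atTop)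
    -- (A3)
    (hA3 : ∀ (u : ℕ → H × W) (l : H × W), TConv u l →
      Tendsto (fun n => I (u n)) atTop (𝓝 (I l)) → Tendsto u atTop (𝓝 l))
    -- (A4)
    (r a : ℝ) (hr : 0 < r)
    (ha : a = sInf {c : ℝ | ∃ h : H, ‖h‖ = r ∧ c = J (h, (0 : W))}) (hapos : 0 < a)
    -- (B1)
    (hB1 : ∀ u : ℕ → H × W, Tendsto (fun n => ‖u n‖) atTop atTop →
      Tendsto (fun n => ‖(u n).1‖ + I (u n)) atTop atTop)
    -- (B2)
    (hB2 : ∀ (t : ℕ → ℝ) (u : ℕ → H × W) (u₀ : H), u₀ ≠ 0 → Tendsto t atTop atTop →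
      Tendsto (fun n => (u n).1) atTop (𝓝 u₀) →
      Tendsto (fun n => I (t n • u n) / t n ^ 2) atTop atTop)
    -- (B4)
    (hB4 : ∀ u ∈ NatConstraint I, ∀ v : W, v ≠ 0 → I u < I (u + ((0 : H), v)))
    :
    (∀ h : H, ∃! w : H × W, w ∈ NatConstraint I ∧ w.1 = h) ∧
      ∃ m : H → H × W, Continuous m ∧
        (∀ h : H, m h ∈ NatConstraint I ∧ (m h).1 = h ∧
          ∀ w : H × W, w.1 = h → w ≠ m h → J w < J (m h)) ∧
        ∀ w ∈ NatConstraint I, m w.1 = w := by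
  classical
  have hIcont : Continuous I := hIC1.continuous
  -- boundedness of sequences with bounded first component and bounded I
  have hbdd : ∀ (u : ℕ → H × W) (C D : ℝ), (∀ n, ‖(u n).1‖ ≤ D) → (∀ n, I (u n) ≤ C) →
      ∃ B, ∀ n, ‖u n‖ ≤ B := by
    intro u C D hD hC
    by_contra hb
    push_neg at hb
    have hk : ∀ k : ℕ, ∃ n, (k : ℝ) < ‖u n‖ := fun k => hb k
    choose nk hnk using hk
    have htend : Tendsto (fun k => ‖u (nk k)‖) atTop atTop :=
      tendsto_atTop_mono (fun k => (hnk k).le) tendsto_natCast_atTop_atTop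
    have h2 := hB1 (fun k => u (nk k)) htend
    obtain ⟨k, hk2⟩ := (h2.eventually_ge_atTop (D + C + 1)).exists
    have := hD (nk k)
    have := hC (nk k)
    linarith
  -- existence of a minimizer of `I` on each fiber
  have hmin : ∀ h : H, ∃ w : W, ∀ v : W, I (h, w) ≤ I (h, v) := by
    intro h
    set s : Set ℝ := Set.range fun v : W => I (h, v) with hs
    have hbb : BddBelow s := ⟨0, by rintro x ⟨v, rfl⟩; exact hA1 _⟩
    have hne : s.Nonempty := ⟨I (h, 0), ⟨0, rfl⟩⟩
    set c : ℝ := sInf s with hc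
    have hcle : ∀ v : W, c ≤ I (h, v) := fun v => csInf_le hbb ⟨v, rfl⟩
    have hseq : ∀ n : ℕ, ∃ v : W, I (h, v) < c + 1 / (n + 1) := by
      intro n
      have : c < c + 1 / (n + 1) := by
        have : (0 : ℝ) < 1 / (n + 1) := by positivity
        linarith
      obtain ⟨x, ⟨v, rfl⟩, hx⟩ := (csInf_lt_iff hbb hne).1 this
      exact ⟨v, hx⟩
    choose vs hvs using hseq
    have hIb : ∀ n, I (h, vs n) ≤ c + 1 := by
      intro n
      have h1 : 1 / ((n : ℝ) + 1) ≤ 1 := by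
        rw [div_le_one (by positivity)]; linarith [Nat.cast_nonneg (α := ℝ) n]
      linarith [hvs n]
    obtain ⟨B, hbb2⟩ := hbdd (fun n => (h, vs n)) (c + 1) ‖h‖ (fun n => le_rfl) hIb
    have hvsB : ∀ n, ‖vs n‖ ≤ B := fun n => (norm_snd_le ((h, vs n) : H × W)).trans (hbb2 n)
    obtain ⟨σ, l, hσ, hw⟩ := my_weak_seq_compact hWrefl vs B hvsB
    have hTC : TConv (fun n => ((h, vs (σ n)) : H × W)) (h, l) :=
      ⟨tendsto_const_nhds, fun φ => hw φ⟩
    have h1 := hA2 _ _ hTC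
    have h2 : liminf (fun n => I (h, vs (σ n))) atTop ≤ c := by
      have hmon : ∀ n : ℕ, I (h, vs (σ n)) ≤ c + 1 / (n + 1) := by
        intro n
        have h3' : n ≤ σ n := hσ.le_apply
        have h3 : (n : ℝ) + 1 ≤ (σ n : ℝ) + 1 := by
          have := (Nat.cast_le (α := ℝ)).2 h3'; linarith
        have h4 : 1 / ((σ n : ℝ) + 1) ≤ 1 / ((n : ℝ) + 1) := by
          apply one_div_le_one_div_of_le (by positivity) h3
        linarith [hvs (σ n)]
      have htc : Tendsto (fun n : ℕ => c + 1 / ((n : ℝ) + 1)) atTop (𝓝 c) := by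
        have : Tendsto (fun n : ℕ => 1 / ((n : ℝ) + 1)) atTop (𝓝 0) :=
          tendsto_one_div_add_atTop_nhds_zero_nat
        simpa using tendsto_const_nhds.add this
      calc liminf (fun n => I (h, vs (σ n))) atTop
          ≤ liminf (fun n : ℕ => c + 1 / ((n : ℝ) + 1)) atTop := by
            exact liminf_le_liminf (Filter.Eventually.of_forall hmon)
              (Filter.isBoundedUnder_of ⟨0, fun n => hA1 _⟩)
              htc.isCoboundedUnder_ge
        _ = c := htc.liminf_eq
    exact ⟨l, fun v => (h1.trans h2).trans (hcle v)⟩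
  -- a fiberwise minimizer lies in the natural constraint
  have hminNC : ∀ u : H × W, (∀ v : W, I u ≤ I (u.1, v)) → u ∈ NatConstraint I := by
    intro u hu v
    have hI : HasFDerivAt I (fderiv ℝ I u) u :=
      (hIC1.differentiable one_ne_zero u).hasFDerivAt
    have hc : HasDerivAt (fun t : ℝ => u + t • (((0 : H), v) : H × W)) ((0 : H), v) 0 := by
      simpa using ((hasDerivAt_id (0 : ℝ)).smul_const (((0 : H), v) : H × W)).const_add u
    have hI0' : HasFDerivAt I (fderiv ℝ I u) (u + (0 : ℝ) • (((0 : H), v) : H × W)) := by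
      simpa using hI
    have hd : HasDerivAt (fun t : ℝ => I (u + t • (((0 : H), v) : H × W)))
        (fderiv ℝ I u ((0 : H), v)) 0 := by
      have := HasFDerivAt.comp_hasDerivAt (0 : ℝ) hI0' hc
      simpa [Function.comp_def] using this
    have key : ∀ t : ℝ, u + t • (((0 : H), v) : H × W) = (u.1, u.2 + t • v) := by
      intro t
      ext
      · simp
      · simp
    have hloc : IsLocalMin (fun t : ℝ => I (u + t • (((0 : H), v) : H × W))) 0 := by
      refine Filter.Eventually.of_forall fun t => ?_
      show I (u + (0 : ℝ) • (((0 : H), v) : H × W)) ≤ I (u + t • (((0 : H), v) : H × W))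
      rw [key 0, key t]
      simpa using hu (u.2 + t • v)
    exact hloc.hasDerivAt_eq_zero hd
  -- a point of the natural constraint is the strict minimum of I on its fiber
  have hNCmin : ∀ u ∈ NatConstraint I, ∀ w : H × W, w.1 = u.1 → w ≠ u → I u < I w := by
    intro u hu w h1 hne
    have hv : w.2 - u.2 ≠ 0 := by
      intro hc
      exact hne (Prod.ext h1 (by rwa [sub_eq_zero] at hc))
    have he : u + ((0 : H), w.2 - u.2) = w := by
      ext
      · simp [h1]
      · simp
    have := hB4 u hu _ hv
    rwa [he] at this
  -- uniqueness on fibers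
  have hNCuniq : ∀ u u' : H × W, u ∈ NatConstraint I → u' ∈ NatConstraint I →
      u.1 = u'.1 → u = u' := by
    intro u u' hu hu' h1
    by_contra hne
    have h2 := hNCmin u hu u' h1.symm (Ne.symm hne)
    have h3 := hNCmin u' hu' u h1 hne
    linarith
  -- the map m
  set m : H → H × W := fun h => (h, Classical.choose (hmin h)) with hm
  have hmmin : ∀ (h : H) (v : W), I (m h) ≤ I (h, v) := fun h => Classical.choose_spec (hmin h)
  have hm1 : ∀ h : H, (m h).1 = h := fun h => rfl
  have hmNC : ∀ h : H, m h ∈ NatConstraint I := fun h => hminNC (m h) fun v => hmmin h v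
  have hmfix : ∀ w ∈ NatConstraint I, m w.1 = w := fun w hw =>
    hNCuniq (m w.1) w (hmNC _) hw rfl
  refine ⟨fun h => ⟨m h, ⟨hmNC h, rfl⟩, fun w ⟨hw, hw1⟩ =>
    hNCuniq w (m h) hw (hmNC h) (by rw [hw1])⟩, m, ?_, ?_, hmfix⟩
  · -- continuity of m
    rw [continuous_iff_seqContinuous]
    intro x h hx
    apply tendsto_of_subseq_tendsto
    intro ns hns
    set u : ℕ → H × W := fun k => m (x (ns k)) with hu
    have hxns : Tendsto (fun k => x (ns k)) atTop (𝓝 h) := hx.comp hns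
    have hbfst : Tendsto (fun k => (u k).1) atTop (𝓝 h) := hxns
    set b : ℕ → ℝ := fun k => I (x (ns k), (m h).2) with hb
    have hbconv : Tendsto b atTop (𝓝 (I (m h))) := by
      have h1 : Tendsto (fun k => ((x (ns k), (m h).2) : H × W)) atTop (𝓝 (h, (m h).2)) :=
        hxns.prodMk_nhds tendsto_const_nhds
      have h2 : ((h, (m h).2) : H × W) = m h := rfl
      rw [hb, ← h2]
      exact (hIcont.tendsto _).comp h1
    have hIle : ∀ k, I (u k) ≤ b k := fun k => hmmin (x (ns k)) (m h).2
    obtain ⟨Cb, hCb⟩ : ∃ Cb, ∀ k, b k ≤ Cb := by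
      obtain ⟨Cb, hCb⟩ := hbconv.bddAbove_range
      exact ⟨Cb, fun k => hCb (Set.mem_range_self k)⟩
    obtain ⟨D, hD⟩ : ∃ D, ∀ k, ‖(u k).1‖ ≤ D := by
      obtain ⟨D, hD⟩ := hxns.norm.bddAbove_range
      exact ⟨D, fun k => hD (Set.mem_range_self k)⟩
    obtain ⟨B, hB⟩ := hbdd u Cb D hD (fun k => (hIle k).trans (hCb k))
    obtain ⟨σ, l, hσ, hwk⟩ := my_weak_seq_compact hWrefl (fun k => (u k).2) B
      (fun k => (norm_snd_le (u k)).trans (hB k))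
    have hTC : TConv (fun k => u (σ k)) (h, l) :=
      ⟨hbfst.comp hσ.tendsto_atTop, fun φ => hwk φ⟩
    have hbddle : IsBoundedUnder (· ≤ ·) atTop (fun k => I (u (σ k))) :=
      Filter.isBoundedUnder_of ⟨Cb, fun k => (hIle (σ k)).trans (hCb (σ k))⟩
    have hbddge : IsBoundedUnder (· ≥ ·) atTop (fun k => I (u (σ k))) :=
      Filter.isBoundedUnder_of ⟨0, fun k => hA1 _⟩
    have hlim1 : I (h, l) ≤ liminf (fun k => I (u (σ k))) atTop := hA2 _ _ hTC
    have hbσ : Tendsto (fun k => b (σ k)) atTop (𝓝 (I (m h))) :=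
      hbconv.comp hσ.tendsto_atTop
    have hlimsup : limsup (fun k => I (u (σ k))) atTop ≤ I (m h) := by
      calc limsup (fun k => I (u (σ k))) atTop ≤ limsup (fun k => b (σ k)) atTop :=
            limsup_le_limsup (Filter.Eventually.of_forall fun k => hIle (σ k))
              hbddge.isCoboundedUnder_le hbσ.isBoundedUnder_le
        _ = I (m h) := hbσ.limsup_eq
    have hminle : I (m h) ≤ I (h, l) := hmmin h l
    have hIconv : Tendsto (fun k => I (u (σ k))) atTop (𝓝 (I (h, l))) :=
      tendsto_of_le_liminf_of_limsup_le hlim1 (hlimsup.trans hminle) hbddle hbddge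
    have heq : ((h, l) : H × W) = m h := by
      have h5 : liminf (fun k => I (u (σ k))) atTop ≤ limsup (fun k => I (u (σ k))) atTop :=
        liminf_le_limsup hbddle hbddge
      have hle2 : I (h, l) ≤ I (m h) := by linarith
      have hNCl : ((h, l) : H × W) ∈ NatConstraint I :=
        hminNC (h, l) fun v => hle2.trans (hmmin h v)
      exact hNCuniq _ _ hNCl (hmNC h) rfl
    refine ⟨σ, ?_⟩
    have hfin := hA3 _ _ hTC hIconv
    rw [heq] at hfin
    exact hfin
  · intro h
    refine ⟨hmNC h, rfl, fun w hw1 hwne => ?_⟩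
    have hlt : I (m h) < I w := hNCmin (m h) (hmNC h) w (by rw [hw1]) hwne
    rw [hJ w, hJ (m h), hw1, hm1]
    linarith
end
end

section
/- Assume (A1)-(A4), (B1), (B2) and (B4), and for u ∈ X⁺ let m(u) be the unique point of M with m(u)⁺ = u. Then the composed functional J ∘ m : X⁺ → ℝ is of class C¹, and its derivative is given by (J ∘ m)'(u)[v] = J'(m(u))[v] for every u, v ∈ X⁺, i.e. (J ∘ m)'(u) is the restriction of J'(m(u)) to X⁺. -/
open Filter Topology

noncomputable section

variable {H W : Type*} [NormedAddCommGroup H] [InnerProductSpace ℝ H] [CompleteSpace H]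
  [NormedAddCommGroup W] [NormedSpace ℝ W] [CompleteSpace W]

set_option linter.unusedSectionVars false
set_option maxHeartbeats 1000000

section WeakCompact
variable {W : Type*} [NormedAddCommGroup W] [NormedSpace ℝ W] [CompleteSpace W]

lemma sep_of_not_mem (S : Submodule ℝ W) (hS : IsClosed (S : Set W)) {x : W} (hx : x ∉ S) :
    ∃ φ : W →L[ℝ] ℝ, (∀ z ∈ S, φ z = 0) ∧ φ x = 1 := by
  obtain ⟨f, u, hfS, hux⟩ :=
    geometric_hahn_banach_closed_point (S.convex (𝕜 := ℝ)) hS hx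
  have hf0 : ∀ z ∈ S, f z = 0 := by
    intro z hz
    by_contra hne
    have h1 : f (((u + 1) / f z) • z) < u := hfS _ (S.smul_mem _ hz)
    rw [map_smul, smul_eq_mul, div_mul_cancel₀ _ hne] at h1
    linarith
  have hu0 : 0 < u := by simpa using hfS 0 S.zero_mem
  have hfx : f x ≠ 0 := by
    have : 0 < f x := lt_trans hu0 hux
    linarith
  exact ⟨(f x)⁻¹ • f, fun z hz => by simp [hf0 z hz],
    by simp [inv_mul_cancel₀ hfx]⟩

end WeakCompact

set_option linter.unusedSectionVars false

section Helpers
variable {α : Type*} [TopologicalSpace α] [T2Space α]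

lemma mapClusterPt_eq_of_tendsto {v : ℕ → α} {y a : α}
    (h : MapClusterPt y atTop v) (h2 : Tendsto v atTop (𝓝 a)) : y = a := by
  have h3 : ClusterPt y (𝓝 a) := h.clusterPt.mono h2
  exact eq_of_nhds_neBot h3

lemma mapClusterPt_mem_of_closed {v : ℕ → α} {y : α} {C : Set α}
    (h : MapClusterPt y atTop v) (hC : IsClosed C) (hv : ∀ n, v n ∈ C) : y ∈ C := by
  by_contra hy
  have := (mapClusterPt_iff_frequently.mp h) Cᶜ (hC.isOpen_compl.mem_nhds hy)
  obtain ⟨n, hn⟩ := this.exists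
  exact hn (hv n)

end Helpers

section WeakCompact2
variable {W : Type*} [NormedAddCommGroup W] [NormedSpace ℝ W] [CompleteSpace W]

lemma exists_weak_cluster
    (hWrefl : Function.Surjective (NormedSpace.inclusionInDoubleDual ℝ W))
    (S : Submodule ℝ W) (hS : IsClosed (S : Set W)) (C : ℝ)
    (z : ℕ → W) (hz : ∀ k, ‖z k‖ ≤ C) (hzS : ∀ k, z k ∈ S) :
    ∃ l ∈ S, ∀ φ : W →L[ℝ] ℝ, MapClusterPt (φ l) atTop (fun k => φ (z k)) := by
  set T := NormedSpace.inclusionInDoubleDual ℝ W with hT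
  set u : ℕ → WeakDual ℝ (StrongDual ℝ W) :=
    fun k => StrongDual.toWeakDual (T (z k)) with hu
  have hTnorm : ∀ w : W, ‖T w‖ ≤ ‖w‖ := fun w =>
    ContinuousLinearMap.opNorm_le_bound _ (norm_nonneg w) (fun φ => by
      rw [NormedSpace.dual_def]
      calc |φ w| ≤ ‖φ‖ * ‖w‖ := φ.le_opNorm w
        _ = ‖w‖ * ‖φ‖ := by ring)
  have hus : ∀ k, u k ∈ (WeakDual.toStrongDual ⁻¹' Metric.closedBall 0 C) := by
    intro k
    simp only [Set.mem_preimage, Metric.mem_closedBall, dist_zero_right]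
    exact le_trans (le_of_eq (dist_zero_right (T (z k)))) (le_trans (hTnorm (z k)) (hz k))
  have hcmp := WeakDual.isCompact_closedBall (𝕜 := ℝ) (E := StrongDual ℝ W) 0 C
  obtain ⟨F, hFs, hF⟩ := hcmp.exists_mapClusterPt (f := atTop)
    (le_principal_iff.mpr (Filter.mem_map.mpr (Filter.Eventually.of_forall hus)))
  obtain ⟨l, hl⟩ := hWrefl (WeakDual.toStrongDual F)
  have key : ∀ φ : W →L[ℝ] ℝ, MapClusterPt (φ l) atTop (fun k => φ (z k)) := by
    intro φ
    have hev : ContinuousAt (fun G : WeakDual ℝ (StrongDual ℝ W) => G φ) F :=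
      (WeakDual.eval_continuous φ).continuousAt
    have := hF.continuousAt_comp hev
    have hFφ : F φ = φ l := by
      have : T l φ = φ l := NormedSpace.dual_def ℝ W l φ
      rw [hl] at this
      exact this
    have huφ : (fun k => u k φ) = fun k => φ (z k) := by
      funext k
      exact NormedSpace.dual_def ℝ W (z k) φ
    rw [hFφ] at this
    have hcomp : ((fun G : WeakDual ℝ (StrongDual ℝ W) => G φ) ∘ u) = fun k => φ (z k) := by
      funext k
      exact NormedSpace.dual_def ℝ W (z k) φ
    rwa [hcomp] at this
  refine ⟨l, ?_, key⟩
  by_contra hlS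
  obtain ⟨φ₀, hφ₀S, hφ₀l⟩ := sep_of_not_mem S hS hlS
  have h0 : Tendsto (fun k => φ₀ (z k)) atTop (𝓝 0) := by
    have : (fun k => φ₀ (z k)) = fun _ => (0 : ℝ) := funext fun k => hφ₀S _ (hzS k)
    rw [this]; exact tendsto_const_nhds
  have := mapClusterPt_eq_of_tendsto (key φ₀) h0
  rw [hφ₀l] at this
  exact one_ne_zero this

end WeakCompact2

section WeakCompact3
variable {W : Type*} [NormedAddCommGroup W] [NormedSpace ℝ W] [CompleteSpace W]

lemma weak_seq_compact_s10
    (hWrefl : Function.Surjective (NormedSpace.inclusionInDoubleDual ℝ W))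
    (C : ℝ) (x : ℕ → W) (hx : ∀ n, ‖x n‖ ≤ C) :
    ∃ (l : W) (ψ : ℕ → ℕ), StrictMono ψ ∧
      ∀ φ : W →L[ℝ] ℝ, Tendsto (fun k => φ (x (ψ k))) atTop (𝓝 (φ l)) := by
  classical
  set S := (Submodule.span ℝ (Set.range x)).topologicalClosure with hSdef
  have hSclosed : IsClosed (S : Set W) := Submodule.isClosed_topologicalClosure _
  have hxS : ∀ n, x n ∈ S := fun n =>
    (Submodule.le_topologicalClosure _) (Submodule.subset_span (Set.mem_range_self n))
  -- separability of S
  have hsep : TopologicalSpace.IsSeparable (S : Set W) := by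
    have h1 : TopologicalSpace.IsSeparable (Set.range x) :=
      (Set.countable_range x).isSeparable
    have h2 := h1.span (R := ℝ)
    have h3 := h2.closure
    rwa [Submodule.topologicalClosure_coe]
  obtain ⟨c, hc_count, hc_sub⟩ := hsep
  have hc_ne : c.Nonempty := by
    by_contra h
    rw [Set.not_nonempty_iff_eq_empty] at h
    have : (0 : W) ∈ closure c := hc_sub S.zero_mem
    simp [h] at this
  obtain ⟨y, hy⟩ := Set.Countable.exists_eq_range hc_count hc_ne
  -- norming functionals
  have hφm : ∀ m : ℕ, ∃ φ : W →L[ℝ] ℝ, ‖φ‖ ≤ 1 ∧ φ (y m) = ‖y m‖ := by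
    intro m
    by_cases h : y m = 0
    · exact ⟨0, by simp, by simp [h]⟩
    · obtain ⟨g, hg1, hg2⟩ := exists_dual_vector ℝ (y m) (norm_ne_zero_iff.mpr h)
      exact ⟨g, le_of_eq hg1, by simpa using hg2⟩
  choose φm hφm1 hφm2 using hφm
  -- the countable family separates points of S
  have hsep_pts : ∀ w ∈ S, (∀ m, φm m w = 0) → w = 0 := by
    intro w hw hvan
    by_contra hwne
    have hwc : w ∈ closure c := hc_sub hw
    rw [Metric.mem_closure_iff] at hwc
    obtain ⟨b, hb, hdist⟩ := hwc (‖w‖ / 3)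
      (by have := norm_pos_iff.mpr hwne; linarith)
    rw [hy] at hb
    obtain ⟨m, rfl⟩ := hb
    have h1 : ‖y m‖ = φm m (y m - w) := by
      rw [map_sub, hvan m, sub_zero, hφm2]
    have h2 : φm m (y m - w) ≤ ‖y m - w‖ := by
      calc φm m (y m - w) ≤ |φm m (y m - w)| := le_abs_self _
        _ ≤ ‖φm m‖ * ‖y m - w‖ := (φm m).le_opNorm _
        _ ≤ 1 * ‖y m - w‖ := by
            exact mul_le_mul_of_nonneg_right (hφm1 m) (norm_nonneg _)
        _ = ‖y m - w‖ := one_mul _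
    have h3 : ‖y m - w‖ < ‖w‖ / 3 := by rwa [← dist_eq_norm, dist_comm]
    have h4 : ‖w‖ - ‖w‖ / 3 < ‖y m‖ := by
      have := norm_sub_norm_le w (y m)
      have h5 : ‖w - y m‖ < ‖w‖ / 3 := by rwa [norm_sub_rev]
      linarith
    have : ‖w‖ > 0 := norm_pos_iff.mpr hwne
    linarith
  -- diagonal extraction via seq compactness of [-C',C']^ℕ
  set C' := max C 0 with hC'
  have hxC' : ∀ n, ‖x n‖ ≤ C' := fun n => le_trans (hx n) (le_max_left _ _)
  set P : ℕ → (ℕ → ℝ) := fun n m => φm m (x n) with hP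
  have hPbound : ∀ n m, P n m ∈ Set.Icc (-C') C' := by
    intro n m
    have : |φm m (x n)| ≤ C' := by
      calc |φm m (x n)| ≤ ‖φm m‖ * ‖x n‖ := (φm m).le_opNorm _
        _ ≤ 1 * C' := mul_le_mul (hφm1 m) (hxC' n) (norm_nonneg _) zero_le_one
        _ = C' := one_mul _
    exact ⟨neg_le_of_abs_le this, le_of_abs_le this⟩
  have hKcomp : IsCompact (Set.univ.pi fun _ : ℕ => Set.Icc (-C') C') :=
    isCompact_univ_pi fun _ => isCompact_Icc
  have hPK : ∀ n, P n ∈ Set.univ.pi fun _ : ℕ => Set.Icc (-C') C' :=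
    fun n => Set.mem_univ_pi.mpr fun m => hPbound n m
  obtain ⟨p, _, ψ, hψmono, hψconv⟩ := hKcomp.isSeqCompact hPK
  have hm_conv : ∀ m, Tendsto (fun k => φm m (x (ψ k))) atTop (𝓝 (p m)) := by
    intro m
    exact (tendsto_pi_nhds.mp hψconv) m
  -- weak cluster point of the subsequence
  obtain ⟨l, hlS, hlcl⟩ := exists_weak_cluster hWrefl S hSclosed C'
    (fun k => x (ψ k)) (fun k => hxC' _) (fun k => hxS _)
  have hlp : ∀ m, φm m l = p m := fun m =>
    mapClusterPt_eq_of_tendsto (hlcl (φm m)) (hm_conv m)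
  refine ⟨l, ψ, hψmono, ?_⟩
  intro φ
  by_contra hnot
  -- extract a subsequence staying ε-away
  have hfreq : ∃ ε > 0, ∃ᶠ k in atTop, ε ≤ dist (φ (x (ψ k))) (φ l) := by
    rw [Metric.tendsto_atTop] at hnot
    push_neg at hnot
    obtain ⟨ε, hε, hN⟩ := hnot
    exact ⟨ε, hε, frequently_atTop.mpr fun N => (hN N).imp fun n ⟨h1, h2⟩ => ⟨h1, h2⟩⟩
  obtain ⟨ε, hε, hfr⟩ := hfreq
  obtain ⟨ρ, hρmono, hρ⟩ := extraction_of_frequently_atTop hfr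
  obtain ⟨l', hl'S, hl'cl⟩ := exists_weak_cluster hWrefl S hSclosed C'
    (fun j => x (ψ (ρ j))) (fun j => hxC' _) (fun j => hxS _)
  have hl'p : ∀ m, φm m l' = p m := fun m =>
    mapClusterPt_eq_of_tendsto (hl'cl (φm m))
      ((hm_conv m).comp hρmono.tendsto_atTop)
  have hll' : l' = l := by
    have hsub : l' - l ∈ S := S.sub_mem hl'S hlS
    have : l' - l = 0 := hsep_pts _ hsub fun m => by
      rw [map_sub, hl'p m, hlp m, sub_self]
    exact sub_eq_zero.mp this
  have hClosed : IsClosed {t : ℝ | ε ≤ dist t (φ l)} :=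
    isClosed_le continuous_const (continuous_id.dist continuous_const)
  have hmem := mapClusterPt_mem_of_closed (hl'cl φ) hClosed (fun j => hρ j)
  rw [hll'] at hmem
  simp only [Set.mem_setOf_eq, dist_self] at hmem
  linarith

end WeakCompact3
set_option linter.unusedSectionVars false


section Main
variable {H W : Type*} [NormedAddCommGroup H] [InnerProductSpace ℝ H] [CompleteSpace H]
  [NormedAddCommGroup W] [NormedSpace ℝ W] [CompleteSpace W]

lemma m_min_strict (I : H × W → ℝ)
    (hB4 : ∀ u ∈ NatConstraint I, ∀ v : W, v ≠ 0 → I u < I (u + ((0 : H), v)))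
    (m : H → H × W) (hm1 : ∀ h, m h ∈ NatConstraint I) (hm2 : ∀ h, (m h).1 = h) :
    ∀ h w, (h, w) ≠ m h → I (m h) < I (h, w) := by
  intro h w hne
  have hv : w - (m h).2 ≠ 0 := by
    intro h0
    apply hne
    exact Prod.ext (hm2 h).symm (sub_eq_zero.mp h0)
  have := hB4 (m h) (hm1 h) (w - (m h).2) hv
  have heq : m h + ((0 : H), w - (m h).2) = (h, w) := by
    ext
    · simp [hm2 h]
    · simp
  rwa [heq] at this

lemma m_min_le (I : H × W → ℝ)
    (hB4 : ∀ u ∈ NatConstraint I, ∀ v : W, v ≠ 0 → I u < I (u + ((0 : H), v)))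
    (m : H → H × W) (hm1 : ∀ h, m h ∈ NatConstraint I) (hm2 : ∀ h, (m h).1 = h) :
    ∀ h w, I (m h) ≤ I (h, w) := by
  intro h w
  by_cases hne : (h, w) = m h
  · rw [hne]
  · exact (m_min_strict I hB4 m hm1 hm2 h w hne).le

lemma bounded_of_B1 (I : H × W → ℝ)
    (hB1 : ∀ u : ℕ → H × W, Tendsto (fun n => ‖u n‖) atTop atTop →
      Tendsto (fun n => ‖(u n).1‖ + I (u n)) atTop atTop)
    (u : ℕ → H × W) (B : ℝ) (hB : ∀ n, ‖(u n).1‖ + I (u n) ≤ B) :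
    ∃ C, ∀ n, ‖u n‖ ≤ C := by
  by_contra h
  push_neg at h
  choose g hg using h
  set v : ℕ → H × W := fun j => u (g (j : ℝ)) with hv
  have hvnorm : Tendsto (fun j : ℕ => ‖v j‖) atTop atTop := by
    apply tendsto_atTop_mono (fun j : ℕ => (hg (j : ℝ)).le)
    exact tendsto_natCast_atTop_atTop
  obtain ⟨n, hn⟩ := ((hB1 v hvnorm).eventually_gt_atTop B).exists
  exact absurd (hB (g (n : ℝ))) (not_le.mpr hn)

end Main

section Cont
variable {H W : Type*} [NormedAddCommGroup H] [InnerProductSpace ℝ H] [CompleteSpace H]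
  [NormedAddCommGroup W] [NormedSpace ℝ W] [CompleteSpace W]


lemma m_continuous (I : H × W → ℝ)
    (hWrefl : Function.Surjective (NormedSpace.inclusionInDoubleDual ℝ W))
    (hIC1 : ContDiff ℝ 1 I) (hA1 : ∀ u : H × W, 0 ≤ I u)
    (hA2 : ∀ (u : ℕ → H × W) (l : H × W), TConv u l →
      I l ≤ Filter.liminf (fun n => I (u n)) atTop)
    (hA3 : ∀ (u : ℕ → H × W) (l : H × W), TConv u l →
      Tendsto (fun n => I (u n)) atTop (𝓝 (I l)) → Tendsto u atTop (𝓝 l))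
    (hB1 : ∀ u : ℕ → H × W, Tendsto (fun n => ‖u n‖) atTop atTop →
      Tendsto (fun n => ‖(u n).1‖ + I (u n)) atTop atTop)
    (m : H → H × W) (hm1 : ∀ h, m h ∈ NatConstraint I) (hm2 : ∀ h, (m h).1 = h)
    (hB4 : ∀ u ∈ NatConstraint I, ∀ v : W, v ≠ 0 → I u < I (u + ((0 : H), v))) :
    Continuous m := by
  have hmin := m_min_le I hB4 m hm1 hm2
  have hstrict := m_min_strict I hB4 m hm1 hm2
  have hIcont : Continuous I := hIC1.continuous
  apply SeqContinuous.continuous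
  intro x p hx
  apply tendsto_of_subseq_tendsto
  intro ns hns
  set u : ℕ → H × W := fun k => m (x (ns k)) with hu
  have hmp : m p = (p, (m p).2) := Prod.ext (hm2 p) rfl
  -- the comparison sequence
  set b : ℕ → ℝ := fun k => I (x (ns k), (m p).2) with hb
  have hxns : Tendsto (fun k => x (ns k)) atTop (𝓝 p) := hx.comp hns
  have hbconv : Tendsto b atTop (𝓝 (I (m p))) := by
    have h1 : Tendsto (fun k => ((x (ns k) : H), (m p).2)) atTop (𝓝 (p, (m p).2)) :=
      hxns.prodMk_nhds tendsto_const_nhds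
    rw [hmp]
    exact (hIcont.tendsto _).comp h1
  have hIub : ∀ k, I (u k) ≤ b k := fun k => hmin (x (ns k)) (m p).2
  obtain ⟨C₁, hC₁⟩ := hbconv.bddAbove_range
  have hC₁' : ∀ k, b k ≤ C₁ := fun k => hC₁ (Set.mem_range_self k)
  obtain ⟨C₂, hC₂⟩ := (hxns.norm).bddAbove_range
  have hnorm1 : ∀ k, ‖(u k).1‖ ≤ C₂ := by
    intro k
    rw [hm2]
    exact hC₂ (Set.mem_range_self k)
  obtain ⟨C, hC⟩ := bounded_of_B1 I hB1 u (C₂ + C₁)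
    (fun k => add_le_add (hnorm1 k) ((hIub k).trans (hC₁' k)))
  -- weak compactness on second components
  obtain ⟨lw, ψ, hψmono, hweak⟩ := weak_seq_compact_s10 hWrefl C (fun k => (u k).2)
    (fun k => le_trans (norm_snd_le _) (hC k))
  set L : H × W := (p, lw) with hL
  set f : ℕ → ℝ := fun j => I (u (ψ j)) with hf
  have hTConv : TConv (fun j => u (ψ j)) L := by
    constructor
    · have : (fun j => (u (ψ j)).1) = fun j => x (ns (ψ j)) := by
        funext j; exact hm2 _
      rw [this]
      exact hxns.comp hψmono.tendsto_atTop
    · exact hweak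
  -- liminf/limsup bookkeeping
  have hbψ : Tendsto (fun j => b (ψ j)) atTop (𝓝 (I (m p))) :=
    hbconv.comp hψmono.tendsto_atTop
  have hfub : ∀ j, f j ≤ b (ψ j) := fun j => hIub (ψ j)
  have hflb : ∀ j, (0 : ℝ) ≤ f j := fun j => hA1 _
  have hbd1 : IsBoundedUnder (· ≤ ·) atTop f :=
    ⟨C₁, Filter.eventually_map.mpr (Eventually.of_forall fun j => (hfub j).trans (hC₁' _))⟩
  have hbd2 : IsBoundedUnder (· ≥ ·) atTop f :=
    ⟨0, Filter.eventually_map.mpr (Eventually.of_forall hflb)⟩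
  have h5 : I L ≤ liminf f atTop := hA2 _ _ hTConv
  have h6 : limsup f atTop ≤ I (m p) := by
    have := Filter.limsup_le_limsup (Eventually.of_forall hfub)
      hbd2.isCoboundedUnder_le (hbψ.bddAbove_range.isBoundedUnder_of_range)
    rwa [hbψ.limsup_eq] at this
  have h7 : I (m p) ≤ I L := hmin p lw
  have h8 : liminf f atTop ≤ limsup f atTop := liminf_le_limsup hbd1 hbd2
  have hIL : I L = I (m p) := le_antisymm (by linarith) h7
  have hLmp : L = m p := by
    by_contra hne
    exact absurd hIL (ne_of_gt (hstrict p lw hne))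
  have hftend : Tendsto f atTop (𝓝 (I L)) := by
    apply tendsto_of_liminf_eq_limsup _ _ hbd1 hbd2
    · linarith
    · linarith
  have := hA3 _ _ hTConv hftend
  rw [hLmp] at this
  exact ⟨ψ, this⟩

end Cont

section Diff
variable {H W : Type*} [NormedAddCommGroup H] [InnerProductSpace ℝ H] [CompleteSpace H]
  [NormedAddCommGroup W] [NormedSpace ℝ W] [CompleteSpace W]

lemma phi_hasFDerivAt (I : H × W → ℝ) (hIC1 : ContDiff ℝ 1 I)
    (m : H → H × W) (hmc : Continuous m) (hm2 : ∀ h, (m h).1 = h)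
    (hmin : ∀ h w, I (m h) ≤ I (h, w)) (h₀ : H) :
    HasFDerivAt (fun h => I (m h))
      ((fderiv ℝ I (m h₀)).comp (ContinuousLinearMap.inl ℝ H W)) h₀ := by
  set G : H × W → (H →L[ℝ] ℝ) := fun q => (fderiv ℝ I q).comp (ContinuousLinearMap.inl ℝ H W)
    with hG
  have hGcont : Continuous G := by
    have h1 : Continuous (fderiv ℝ I) := hIC1.continuous_fderiv one_ne_zero
    exact (((ContinuousLinearMap.compL ℝ H (H × W) ℝ).flip
      (ContinuousLinearMap.inl ℝ H W)).continuous).comp h1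
  have hmp : m h₀ = (h₀, (m h₀).2) := Prod.ext (hm2 h₀) rfl
  rw [hasFDerivAt_iff_isLittleO_nhds_zero]
  rw [Asymptotics.isLittleO_iff]
  intro c hc
  -- choose δ for continuity of G at m h₀
  obtain ⟨δ, hδpos, hδ⟩ := Metric.continuousAt_iff.mp (hGcont.continuousAt (x := m h₀)) c hc
  -- choose δ₂ for continuity of (m ·).2 at h₀
  have hm2cont : Continuous (fun h => (m h).2) := continuous_snd.comp hmc
  obtain ⟨δ₂, hδ₂pos, hδ₂⟩ := Metric.continuousAt_iff.mp (hm2cont.continuousAt (x := h₀)) δ hδpos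
  set η := min δ δ₂ with hη
  have hηpos : 0 < η := lt_min hδpos hδ₂pos
  filter_upwards [Metric.ball_mem_nhds (0 : H) hηpos] with v hv
  -- v is the increment; set h := h₀ + v
  rw [Metric.mem_ball, dist_zero_right] at hv
  have hvδ : ‖v‖ < δ := lt_of_lt_of_le hv (min_le_left _ _)
  have hvδ₂ : ‖v‖ < δ₂ := lt_of_lt_of_le hv (min_le_right _ _)
  set h := h₀ + v with hh
  -- key MVT estimate for fixed w close to (m h₀).2
  have key : ∀ w : W, dist w (m h₀).2 < δ →
      |I (h, w) - I (h₀, w) - (G (m h₀)) v| ≤ c * ‖v‖ := by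
    intro w hw
    have hfd : ∀ ξ ∈ Metric.ball h₀ δ,
        HasFDerivWithinAt (fun ξ' : H => I (ξ', w)) (G (ξ, w)) (Metric.ball h₀ δ) ξ := by
      intro ξ _
      exact (((hIC1.differentiable one_ne_zero) (ξ, w)).hasFDerivAt.comp ξ
        (hasFDerivAt_prodMk_left ξ w)).hasFDerivWithinAt
    have hbound : ∀ ξ ∈ Metric.ball h₀ δ, ‖G (ξ, w) - G (m h₀)‖ ≤ c := by
      intro ξ hξ
      rw [Metric.mem_ball] at hξ
      have hdist : dist ((ξ, w) : H × W) (m h₀) < δ := by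
        rw [hmp, Prod.dist_eq]
        exact max_lt hξ hw
      exact (le_of_lt (by simpa [dist_eq_norm] using hδ hdist))
    have hh₀ : h₀ ∈ Metric.ball h₀ δ := Metric.mem_ball_self hδpos
    have hhmem : h ∈ Metric.ball h₀ δ := by
      rw [Metric.mem_ball, dist_eq_norm, hh, add_sub_cancel_left]
      exact hvδ
    have := (convex_ball h₀ δ).norm_image_sub_le_of_norm_hasFDerivWithin_le'
      hfd hbound hh₀ hhmem
    rw [hh, add_sub_cancel_left] at this
    simpa [Real.norm_eq_abs] using this
  -- sandwich
  have hub : I (m h) - I (m h₀) - (G (m h₀)) v ≤ c * ‖v‖ := by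
    have h1 : I (m h) ≤ I (h, (m h₀).2) := hmin h (m h₀).2
    have h2 : I (m h₀) = I (h₀, (m h₀).2) := by rw [← hmp]
    have h3 := key (m h₀).2 (by simp [hδpos])
    have := abs_le.mp h3
    linarith [this.2]
  have hlb : -(c * ‖v‖) ≤ I (m h) - I (m h₀) - (G (m h₀)) v := by
    have h1 : I (m h) = I (h, (m h).2) := by
      congr 1
      exact Prod.ext (hm2 h) rfl
    have h2 : I (m h₀) ≤ I (h₀, (m h).2) := hmin h₀ (m h).2
    have h3 : dist (m h).2 (m h₀).2 < δ := hδ₂ (by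
      rw [dist_eq_norm, hh, add_sub_cancel_left]; exact hvδ₂)
    have h4 := key (m h).2 h3
    have := abs_le.mp h4
    linarith [this.1]
  rw [Real.norm_eq_abs]
  exact abs_le.mpr ⟨hlb, hub⟩

end Diff

/-- **Claims (ii) and (iii) of Theorem 4.6.** Under (A1)-(A4), (B1), (B2), (B4), with `m(u)`
the unique point of `M` above `u ∈ X⁺`, the functional `J ∘ m : X⁺ → ℝ` is of class `C¹` and
`(J ∘ m)'(u)[v] = J'(m(u))[v]` for all `u, v ∈ X⁺`. -/
theorem statement10
    (I J : H × W → ℝ)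
    (hWrefl : Function.Surjective (NormedSpace.inclusionInDoubleDual ℝ W))
    (hJ : ∀ u : H × W, J u = 1 / 2 * ‖u.1‖ ^ 2 - I u)
    -- (A1)
    (hIC1 : ContDiff ℝ 1 I) (hA1 : ∀ u : H × W, 0 ≤ I u) (hI0 : I 0 = 0)
    -- (A2)
    (hA2 : ∀ (u : ℕ → H × W) (l : H × W), TConv u l →
      I l ≤ Filter.liminf (fun n => I (u n)) atTop)
    -- (A3)
    (hA3 : ∀ (u : ℕ → H × W) (l : H × W), TConv u l →
      Tendsto (fun n => I (u n)) atTop (𝓝 (I l)) → Tendsto u atTop (𝓝 l))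
    -- (A4)
    (r a : ℝ) (hr : 0 < r)
    (ha : a = sInf {c : ℝ | ∃ h : H, ‖h‖ = r ∧ c = J (h, (0 : W))}) (hapos : 0 < a)
    -- (B1)
    (hB1 : ∀ u : ℕ → H × W, Tendsto (fun n => ‖u n‖) atTop atTop →
      Tendsto (fun n => ‖(u n).1‖ + I (u n)) atTop atTop)
    -- (B2)
    (hB2 : ∀ (t : ℕ → ℝ) (u : ℕ → H × W) (u₀ : H), u₀ ≠ 0 → Tendsto t atTop atTop →
      Tendsto (fun n => (u n).1) atTop (𝓝 u₀) →
      Tendsto (fun n => I (t n • u n) / t n ^ 2) atTop atTop)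
    -- (B4)
    (hB4 : ∀ u ∈ NatConstraint I, ∀ v : W, v ≠ 0 → I u < I (u + ((0 : H), v)))
    -- `m(h)` is the unique point of `M` above `h ∈ X⁺`
    (m : H → H × W)
    (hm : ∀ h : H, (m h ∈ NatConstraint I ∧ (m h).1 = h) ∧
      ∀ w : H × W, w ∈ NatConstraint I ∧ w.1 = h → w = m h) :
    ContDiff ℝ 1 (fun h : H => J (m h)) ∧
      ∀ u v : H, fderiv ℝ (fun h : H => J (m h)) u v = fderiv ℝ J (m u) (v, (0 : W)) := by
  have hm1 : ∀ h, m h ∈ NatConstraint I := fun h => (hm h).1.1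
  have hm2 : ∀ h, (m h).1 = h := fun h => (hm h).1.2
  have hmin := m_min_le I hB4 m hm1 hm2
  have hmc : Continuous m := m_continuous I hWrefl hIC1 hA1 hA2 hA3 hB1 m hm1 hm2 hB4
  have hphi : ∀ h₀ : H, HasFDerivAt (fun h => I (m h))
      ((fderiv ℝ I (m h₀)).comp (ContinuousLinearMap.inl ℝ H W)) h₀ :=
    fun h₀ => phi_hasFDerivAt I hIC1 m hmc hm2 hmin h₀
  have hggC : ContDiff ℝ 1 (fun h : H => 1 / 2 * ‖h‖ ^ 2) :=
    contDiff_const.mul (contDiff_norm_sq ℝ)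
  have hJm : (fun h : H => J (m h)) = fun h => 1 / 2 * ‖h‖ ^ 2 - I (m h) := by
    funext h
    rw [hJ (m h), hm2 h]
  have hphiC : ContDiff ℝ 1 (fun h => I (m h)) := by
    rw [contDiff_one_iff_fderiv]
    refine ⟨fun h => (hphi h).differentiableAt, ?_⟩
    have heq : (fderiv ℝ (fun h => I (m h))) =
        fun h => (fderiv ℝ I (m h)).comp (ContinuousLinearMap.inl ℝ H W) := by
      funext h; exact (hphi h).fderiv
    rw [heq]
    exact (((ContinuousLinearMap.compL ℝ H (H × W) ℝ).flip
      (ContinuousLinearMap.inl ℝ H W)).continuous).comp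
      ((hIC1.continuous_fderiv one_ne_zero).comp hmc)
  constructor
  · rw [hJm]; exact hggC.sub hphiC
  · intro u v
    have hL : HasFDerivAt (fun h : H => J (m h))
        (fderiv ℝ (fun h : H => 1 / 2 * ‖h‖ ^ 2) u -
          (fderiv ℝ I (m u)).comp (ContinuousLinearMap.inl ℝ H W)) u := by
      rw [hJm]
      exact ((hggC.differentiable one_ne_zero u).hasFDerivAt).sub (hphi u)
    have hJeq : J = fun p : H × W => 1 / 2 * ‖p.1‖ ^ 2 - I p := funext hJ
    have hgfst : HasFDerivAt (fun p : H × W => 1 / 2 * ‖p.1‖ ^ 2)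
        ((fderiv ℝ (fun h : H => 1 / 2 * ‖h‖ ^ 2) ((m u).1)).comp
          (ContinuousLinearMap.fst ℝ H W)) (m u) :=
      ((hggC.differentiable one_ne_zero ((m u).1)).hasFDerivAt).comp (m u) hasFDerivAt_fst
    have hR : HasFDerivAt J
        (((fderiv ℝ (fun h : H => 1 / 2 * ‖h‖ ^ 2) ((m u).1)).comp
          (ContinuousLinearMap.fst ℝ H W)) - fderiv ℝ I (m u)) (m u) := by
      rw [hJeq]
      exact hgfst.sub ((hIC1.differentiable one_ne_zero (m u)).hasFDerivAt)
    rw [hL.fderiv, hR.fderiv]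
    simp [ContinuousLinearMap.sub_apply, ContinuousLinearMap.comp_apply, hm2 u]
end
end
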